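/- arXiv:1110.6779 — 2 statements merged into one kernel-verified Lean document; each statement's English description precedes it below -/
import Mathlib

section
/- For n ≥ 2, R_n(x) = 2^{-(n-1)} · Σ_{k=0}^{⌊(n+1)/2⌋} p(n, n-2k+1) · (x+1)^{n-k-1} · (x-1)^k, where p(n,j) are the coefficients of the derivative polynomial P_n. -/
open Polynomial Finset

/-- Derivative polynomials for tangent: `P 0 = X`, `P (n+1) = (1+X^2) * (P n)'`. -/
noncomputable def P : ℕ → Polynomial ℝ
  | 0 => Polynomial.X
  | n + 1 => (1 + Polynomial.X ^ 2) * (P n).derivative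

/-- The values of a permutation of `Fin n`, as a function `ℕ → ℕ` (junk value `0` off-range). -/
def permVal {n : ℕ} (π : Equiv.Perm (Fin n)) : ℕ → ℕ :=
  fun j => if h : j < n then (π ⟨j, h⟩ : ℕ) else 0

/-- The number of alternating runs of a permutation of `{1,…,n}` (0-indexed positions):
one more than the number of interior positions where the permutation changes direction.
By convention this is `0` when `n ≤ 1`. -/
def runs (n : ℕ) (π : Equiv.Perm (Fin n)) : ℕ :=
  if n ≤ 1 then 0 else
    1 + ((Finset.Ico 1 (n - 1)).filter (fun i =>
      (permVal π (i - 1) < permVal π i ∧ permVal π (i + 1) < permVal π i) ∨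
      (permVal π i < permVal π (i - 1) ∧ permVal π i < permVal π (i + 1)))).card

/-- `R n k`: the number of permutations of `{1,…,n}` with exactly `k` alternating runs. -/
def R (n k : ℕ) : ℕ :=
  (Finset.univ.filter (fun π : Equiv.Perm (Fin n) => runs n π = k)).card

/-- The generating polynomial `R_n(x) = ∑_k R(n,k) x^k`. -/
noncomputable def Rpoly (n : ℕ) : Polynomial ℝ :=
  ∑ k ∈ Finset.range n, Polynomial.C ((R n k : ℝ)) * Polynomial.X ^ k

/-- Stirling numbers of the second kind. -/
def stirling2 : ℕ → ℕ → ℕ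
  | 0, 0 => 1
  | 0, _ + 1 => 0
  | _ + 1, 0 => 0
  | n + 1, k + 1 => (k + 1) * stirling2 n (k + 1) + stirling2 n k

/-- The number of descents of a permutation of `Fin n`. -/
def des (n : ℕ) (π : Equiv.Perm (Fin n)) : ℕ :=
  ((Finset.range (n - 1)).filter (fun i => permVal π (i + 1) < permVal π i)).card

namespace RunsProof

/-- number of direction changes among the first `m` directions `d 0, …, d (m-1)`. -/
def tc (m : ℕ) (d : ℕ → Bool) : ℕ :=
  ∑ j ∈ Finset.range (m - 1), if d j ≠ d (j + 1) then 1 else 0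

/-- splice `[false, true]` at slot `i`, deleting direction `i-1`. -/
def spl (i : ℕ) (d : ℕ → Bool) : ℕ → Bool :=
  fun j => if j + 1 < i then d j else if j + 1 = i then false
    else if j = i then true else d (j - 1)

noncomputable def Spoly (m : ℕ) (d : ℕ → Bool) : Polynomial ℝ :=
  ∑ i ∈ Finset.range (m + 2), X ^ (tc (m + 1) (spl i d))

lemma spl_lt {i j : ℕ} (h : j + 1 < i) (d : ℕ → Bool) : spl i d j = d j := by
  simp [spl, h]

lemma spl_pred {i j : ℕ} (h : j + 1 = i) (d : ℕ → Bool) : spl i d j = false := by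
  simp [spl, h]

lemma spl_self {i : ℕ} (d : ℕ → Bool) : spl i d i = true := by
  simp [spl]

lemma spl_gt {i j : ℕ} (h : i < j) (d : ℕ → Bool) : spl i d j = d (j - 1) := by
  have h1 : ¬ (j + 1 < i) := by omega
  have h2 : ¬ (j + 1 = i) := by omega
  have h3 : ¬ (j = i) := by omega
  simp [spl, h1, h2, h3]

lemma tc_succ (m : ℕ) (hm : 1 ≤ m) (d : ℕ → Bool) :
    tc (m + 1) d = tc m d + if d (m - 1) ≠ d m then 1 else 0 := by
  unfold tc
  have : m + 1 - 1 = (m - 1) + 1 := by omega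
  have h2 : m - 1 + 1 = m := by omega
  rw [this, Finset.sum_range_succ, h2]

lemma tc_spl_append (s : ℕ) (d : ℕ → Bool) :
    tc (s + 2) (spl (s + 2) d) = tc (s + 1) d + (if d s then 1 else 0) := by
  unfold tc
  have h1 : s + 2 - 1 = s + 1 := rfl
  have h2 : s + 1 - 1 = s := rfl
  rw [h1, h2, Finset.sum_range_succ]
  congr 1
  · exact Finset.sum_congr rfl fun j hj => by
      simp only [Finset.mem_range] at hj
      rw [spl_lt (by omega), spl_lt (by omega)]
  · rw [spl_lt (by omega), spl_pred (by omega)]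
    cases d s <;> simp

lemma tc_spl_ft (s : ℕ) (d : ℕ → Bool) :
    tc (s + 3) (spl (s + 2) d) = tc (s + 1) d + (if d s then 1 else 0) + 1 := by
  unfold tc
  have h1 : s + 3 - 1 = s + 2 := rfl
  have h2 : s + 1 - 1 = s := rfl
  rw [h1, h2, Finset.sum_range_succ, Finset.sum_range_succ]
  congr 2
  · exact Finset.sum_congr rfl fun j hj => by
      simp only [Finset.mem_range] at hj
      rw [spl_lt (by omega), spl_lt (by omega)]
  · rw [spl_lt (by omega), spl_pred (by omega)]
    cases d s <;> simp
  · rw [spl_pred (by omega), spl_self]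
    simp

lemma tc_le (m : ℕ) (d : ℕ → Bool) : tc m d ≤ m - 1 := by
  unfold tc
  calc ∑ j ∈ Finset.range (m-1), (if d j ≠ d (j+1) then 1 else 0)
      ≤ ∑ _j ∈ Finset.range (m-1), 1 := by
        apply Finset.sum_le_sum; intro j _; split <;> omega
    _ = m - 1 := by simp

lemma Spoly_base (d : ℕ → Bool) :
    Spoly 1 d = X ^ (tc 1 d) *
      (C ((tc 1 d : ℝ) + 1) + C 2 * X + C (((1 - 1 - tc 1 d : ℕ)) : ℝ) * X ^ 2) := by
  have h0 : tc 1 d = 0 := by simp [tc]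
  have e0 : tc 2 (spl 0 d) = if d 0 then 0 else 1 := by
    have := spl_self (i := 0) d
    have h1 : spl 0 d 1 = d 0 := spl_gt (by omega) d
    simp only [tc, show (2:ℕ)-1 = 1 from rfl, Finset.sum_range_one, this, h1]
    cases d 0 <;> simp
  have e1 : tc 2 (spl 1 d) = 1 := by
    have h1 : spl 1 d 0 = false := spl_pred (by omega) d
    have h2 : spl 1 d 1 = true := spl_self d
    simp [tc, h1, h2]
  have e2 : tc 2 (spl 2 d) = if d 0 then 1 else 0 := by
    have h1 : spl 2 d 0 = d 0 := spl_lt (by omega) d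
    have h2 : spl 2 d 1 = false := spl_pred (by omega) d
    simp only [tc, show (2:ℕ)-1 = 1 from rfl, Finset.sum_range_one, h1, h2]
    cases d 0 <;> simp
  unfold Spoly
  rw [show (1+2:ℕ) = 3 from rfl, Finset.sum_range_succ, Finset.sum_range_succ,
    Finset.sum_range_one, e0, e1, e2, h0]
  cases d 0 <;> · simp [map_ofNat]; ring

lemma Spoly_step (t : ℕ) (d : ℕ → Bool)
    (IH : Spoly (t+2) d = X ^ (tc (t+2) d) *
      (C ((tc (t+2) d : ℝ) + 1) + C 2 * X + C (((t + 1 - tc (t+2) d : ℕ)) : ℝ) * X ^ 2)) :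
    Spoly (t+3) d = X ^ (tc (t+3) d) *
      (C ((tc (t+3) d : ℝ) + 1) + C 2 * X + C (((t + 2 - tc (t+3) d : ℕ)) : ℝ) * X ^ 2) := by
  classical
  set T := tc (t+1) d with hT
  have hTle : T ≤ t := by have := tc_le (t+1) d; simpa using this
  have F1 : tc (t+2) d = T + (if d t ≠ d (t+1) then 1 else 0) := tc_succ (t+1) (by omega) d
  have F2 : tc (t+3) d = tc (t+2) d + (if d (t+1) ≠ d (t+2) then 1 else 0) :=
    tc_succ (t+2) (by omega) d
  -- value lemmas
  have hv1 : tc (t+3) (spl (t+2) d) = T + (if d t then 1 else 0) + 1 := tc_spl_ft t d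
  have hv2 : tc (t+3) (spl (t+3) d) = tc (t+2) d + (if d (t+1) then 1 else 0) :=
    tc_spl_append (t+1) d
  have hw1 : tc (t+4) (spl (t+3) d) = tc (t+2) d + (if d (t+1) then 1 else 0) + 1 :=
    tc_spl_ft (t+1) d
  have hw2 : tc (t+4) (spl (t+4) d) = tc (t+3) d + (if d (t+2) then 1 else 0) :=
    tc_spl_append (t+2) d
  have hw0 : tc (t+4) (spl (t+2) d)
      = T + (if d t then 1 else 0) + 1 + (if d (t+2) then 0 else 1) := by
    have h := tc_succ (t+3) (by omega) (spl (t+2) d)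
    have ha : spl (t+2) d (t+2) = true := spl_self d
    have hb : spl (t+2) d (t+3) = d (t+2) := spl_gt (by omega) d
    rw [show t+4 = t+3+1 from rfl, h, hv1]
    rw [show t+3-1 = t+2 from rfl, ha, hb]
    cases d (t+2) <;> simp
  -- split the big sum
  have hsplit : Spoly (t+3) d
      = (∑ i ∈ Finset.range (t+2), X ^ (tc (t+4) (spl i d)))
        + X ^ (tc (t+4) (spl (t+2) d)) + X ^ (tc (t+4) (spl (t+3) d))
        + X ^ (tc (t+4) (spl (t+4) d)) := by
    unfold Spoly
    rw [show t+3+2 = (t+2)+1+1+1 from rfl, Finset.sum_range_succ, Finset.sum_range_succ,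
      Finset.sum_range_succ]
  have hcong : (∑ i ∈ Finset.range (t+2), (X : Polynomial ℝ) ^ (tc (t+4) (spl i d)))
      = (∑ i ∈ Finset.range (t+2), X ^ (tc (t+3) (spl i d)))
        * X ^ (if d (t+1) ≠ d (t+2) then 1 else 0) := by
    rw [Finset.sum_mul]
    apply Finset.sum_congr rfl
    intro i hi
    simp only [Finset.mem_range] at hi
    have h := tc_succ (t+3) (by omega) (spl i d)
    have ha : spl i d (t+2) = d (t+1) := spl_gt (by omega) d
    have hb : spl i d (t+3) = d (t+2) := spl_gt (by omega) d
    rw [show t+4 = t+3+1 from rfl, h, show t+3-1 = t+2 from rfl, ha, hb, pow_add]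
  have hkey0 : Spoly (t+2) d
      = (∑ i ∈ Finset.range (t+2), X ^ (tc (t+3) (spl i d)))
        + X ^ (tc (t+3) (spl (t+2) d)) + X ^ (tc (t+3) (spl (t+3) d)) := by
    unfold Spoly
    rw [show t+2+2 = (t+2)+1+1 from rfl, Finset.sum_range_succ, Finset.sum_range_succ]
  have hkey : (∑ i ∈ Finset.range (t+2), X ^ (tc (t+3) (spl i d)))
      = Spoly (t+2) d - X ^ (tc (t+3) (spl (t+2) d)) - X ^ (tc (t+3) (spl (t+3) d)) := by
    rw [hkey0]; ring
  rw [hsplit, hcong, hkey, IH, hv1, hv2, hw0, hw1, hw2, F2, F1]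
  have hc1 : ((t + 1 - (T + (if d t ≠ d (t+1) then 1 else 0)) : ℕ) : ℝ)
      = (t:ℝ) + 1 - (T + (if d t ≠ d (t+1) then 1 else 0) : ℕ) := by
    rw [Nat.cast_sub (by split <;> omega)]; push_cast; ring
  have hc2 : ((t + 2 - (T + (if d t ≠ d (t+1) then 1 else 0)
        + (if d (t+1) ≠ d (t+2) then 1 else 0)) : ℕ) : ℝ)
      = (t:ℝ) + 2 - (T + (if d t ≠ d (t+1) then 1 else 0)
        + (if d (t+1) ≠ d (t+2) then 1 else 0) : ℕ) := by
    rw [Nat.cast_sub (by split <;> split <;> omega)]; push_cast; ring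
  rw [hc1, hc2]
  cases ht0 : d t <;> cases ht1 : d (t+1) <;> cases ht2 : d (t+2) <;>
    · simp only [ht0, ht1, ht2, map_ofNat]
      norm_num [map_ofNat]
      push_cast
      ring

lemma Spoly_base2 (d : ℕ → Bool) :
    Spoly 2 d = X ^ (tc 2 d) *
      (C ((tc 2 d : ℝ) + 1) + C 2 * X + C (((2 - 1 - tc 2 d : ℕ)) : ℝ) * X ^ 2) := by
  have s00 : spl 0 d 0 = true := spl_self d
  have s01 : spl 0 d 1 = d 0 := spl_gt (by omega) d
  have s02 : spl 0 d 2 = d 1 := spl_gt (by omega) d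
  have s10 : spl 1 d 0 = false := spl_pred (by omega) d
  have s11 : spl 1 d 1 = true := spl_self d
  have s12 : spl 1 d 2 = d 1 := spl_gt (by omega) d
  have s20 : spl 2 d 0 = d 0 := spl_lt (by omega) d
  have s21 : spl 2 d 1 = false := spl_pred (by omega) d
  have s22 : spl 2 d 2 = true := spl_self d
  have s30 : spl 3 d 0 = d 0 := spl_lt (by omega) d
  have s31 : spl 3 d 1 = d 1 := spl_lt (by omega) d
  have s32 : spl 3 d 2 = false := spl_pred (by omega) d
  cases h0 : d 0 <;> cases h1 : d 1 <;>
    · simp [Spoly, tc, Finset.sum_range_succ, s00, s01, s02, s10, s11, s12, s20, s21,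
        s22, s30, s31, s32, h0, h1, map_ofNat]
      ring

lemma Spoly_eq (m : ℕ) (hm : 1 ≤ m) (d : ℕ → Bool) :
    Spoly m d = X ^ (tc m d) *
      (C ((tc m d : ℝ) + 1) + C 2 * X + C (((m - 1 - tc m d : ℕ)) : ℝ) * X ^ 2) := by
  rcases Nat.lt_or_ge m 2 with h | h
  · have : m = 1 := by omega
    subst this
    exact Spoly_base d
  · -- m ≥ 2 : induction
    induction m, h using Nat.le_induction with
    | base => exact Spoly_base2 d
    | succ n hn ih =>
      have hn2 : ∃ t, n = t + 2 := ⟨n - 2, by omega⟩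
      obtain ⟨t, rfl⟩ := hn2
      have := Spoly_step t d (ih (by omega))
      convert this using 3 <;> rfl

lemma permVal_lt {n : ℕ} (π : Equiv.Perm (Fin n)) {j : ℕ} (hj : j < n) :
    permVal π j < n := by
  simp only [permVal, dif_pos hj]
  exact (π ⟨j, hj⟩).isLt

lemma permVal_inj {n : ℕ} (π : Equiv.Perm (Fin n)) {j k : ℕ} (hj : j < n) (hk : k < n)
    (h : permVal π j = permVal π k) : j = k := by
  simp only [permVal, dif_pos hj, dif_pos hk] at h
  have := π.injective (Fin.val_injective h)
  simpa [Fin.ext_iff] using this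

/-- insert the maximal value `n` at slot `i`. -/
def ins {n : ℕ} (π : Equiv.Perm (Fin n)) (i : Fin (n + 1)) : Equiv.Perm (Fin (n + 1)) :=
  (finSuccEquiv' i).trans ((Equiv.optionCongr π).trans (finSuccEquiv' (Fin.last n)).symm)

lemma permVal_ins {n : ℕ} (π : Equiv.Perm (Fin n)) (i : Fin (n + 1)) (j : ℕ) (hj : j ≤ n) :
    permVal (ins π i) j =
      if j < (i : ℕ) then permVal π j else if j = (i : ℕ) then n else permVal π (j - 1) := by
  have hj1 : j < n + 1 := by omega
  have hval : permVal (ins π i) j = ((ins π i) ⟨j, hj1⟩ : ℕ) := by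
    simp only [permVal, dif_pos hj1]
  rcases Nat.lt_trichotomy j (i : ℕ) with h | h | h
  · -- j < i
    have hjn : j < n := by have := i.isLt; omega
    have hm : (Fin.castSucc ⟨j, hjn⟩ : Fin (n+1)) = ⟨j, hj1⟩ := rfl
    have hlt : Fin.castSucc (⟨j, hjn⟩ : Fin n) < i := by
      simp [Fin.lt_def, h]
    have : (ins π i) ⟨j, hj1⟩ = Fin.castSucc (π ⟨j, hjn⟩) := by
      rw [← hm]
      simp only [ins, Equiv.trans_apply]
      rw [finSuccEquiv'_below hlt]
      simp [Fin.succAbove_last]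
    rw [hval, this]
    simp [h, permVal, dif_pos hjn]
  · -- j = i
    have : (⟨j, hj1⟩ : Fin (n+1)) = i := by simp [Fin.ext_iff, h]
    rw [hval, this]
    simp only [ins, Equiv.trans_apply, finSuccEquiv'_at]
    simp [finSuccEquiv'_symm_none, h]
  · -- i < j
    have hjn : j - 1 < n := by omega
    have hm : ((⟨j - 1, hjn⟩ : Fin n).succ : Fin (n+1)) = ⟨j, hj1⟩ := by
      simp [Fin.ext_iff]; omega
    have hle : i ≤ Fin.castSucc (⟨j - 1, hjn⟩ : Fin n) := by
      simp [Fin.le_def]; omega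
    have : (ins π i) ⟨j, hj1⟩ = Fin.castSucc (π ⟨j - 1, hjn⟩) := by
      rw [← hm, ← Fin.succAbove_of_le_castSucc i _ hle]
      simp only [ins, Equiv.trans_apply]
      rw [finSuccEquiv'_succAbove]
      simp [Fin.succAbove_last]
    rw [hval, this]
    have h1 : ¬ (j < (i:ℕ)) := by omega
    have h2 : ¬ (j = (i:ℕ)) := by omega
    simp [h1, h2, permVal, dif_pos hjn]

def dirs {n : ℕ} (π : Equiv.Perm (Fin n)) : ℕ → Bool :=
  fun j => decide (permVal π (j + 1) < permVal π j)

lemma dirs_ins {n : ℕ} (π : Equiv.Perm (Fin n)) (i : Fin (n + 1)) {j : ℕ} (hj : j < n) :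
    dirs (ins π i) j = spl (i : ℕ) (dirs π) j := by
  have hi : (i : ℕ) ≤ n := Nat.lt_succ_iff.mp i.isLt
  have h1 := permVal_ins π i j (by omega)
  have h2 := permVal_ins π i (j + 1) (by omega)
  rcases Nat.lt_trichotomy (j + 1) (i : ℕ) with h | h | h
  · have e1 : permVal (ins π i) j = permVal π j := by rw [h1, if_pos (by omega)]
    have e2 : permVal (ins π i) (j + 1) = permVal π (j + 1) := by rw [h2, if_pos h]
    rw [spl_lt h]; unfold dirs; rw [e1, e2]
  · have e1 : permVal (ins π i) j = permVal π j := by rw [h1, if_pos (by omega)]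
    have e2 : permVal (ins π i) (j + 1) = n := by rw [h2, if_neg (by omega), if_pos h]
    rw [spl_pred h]; unfold dirs; rw [e1, e2]
    exact decide_eq_false (Nat.not_lt.mpr (le_of_lt (permVal_lt π hj)))
  · rcases Nat.lt_or_ge (i : ℕ) j with h' | h'
    · have e1 : permVal (ins π i) j = permVal π (j - 1) := by
        rw [h1, if_neg (by omega), if_neg (by omega)]
      have e2 : permVal (ins π i) (j + 1) = permVal π j := by
        rw [h2, if_neg (by omega), if_neg (by omega), Nat.add_sub_cancel]
      rw [spl_gt h']; unfold dirs
      rw [e1, e2, show j - 1 + 1 = j by omega]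
    · have hje : j = (i : ℕ) := by omega
      have e1 : permVal (ins π i) j = n := by rw [h1, if_neg (by omega), if_pos hje]
      have e2 : permVal (ins π i) (j + 1) = permVal π j := by
        rw [h2, if_neg (by omega), if_neg (by omega), Nat.add_sub_cancel]
      have e3 : spl (i : ℕ) (dirs π) j = true := by rw [hje]; exact spl_self _
      rw [e3]; unfold dirs; rw [e1, e2]
      exact decide_eq_true (permVal_lt π hj)

lemma tc_congr (m : ℕ) {d d' : ℕ → Bool} (h : ∀ j < m, d j = d' j) : tc m d = tc m d' := by
  unfold tc
  apply Finset.sum_congr rfl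
  intro j hj
  simp only [Finset.mem_range] at hj
  rw [h j (by omega), h (j + 1) (by omega)]

lemma runs_eq_tc {n : ℕ} (hn : 2 ≤ n) (π : Equiv.Perm (Fin n)) :
    runs n π = 1 + tc (n - 1) (dirs π) := by
  unfold runs
  rw [if_neg (by omega)]
  congr 1
  rw [Finset.card_filter]
  unfold tc
  rw [Finset.sum_Ico_eq_sum_range]
  apply Finset.sum_congr (by congr 1)
  intro j hj
  simp only [Finset.mem_range] at hj
  have hj2 : j + 2 < n := by omega
  have ha : 1 + j - 1 = j := by omega
  have hb : 1 + j + 1 = j + 1 + 1 := by omega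
  have hc : 1 + j = j + 1 := by omega
  rw [ha, hb, hc]
  have hab : permVal π j ≠ permVal π (j + 1) := fun h =>
    by have := permVal_inj π (by omega) (by omega) h; omega
  have hbc : permVal π (j + 1) ≠ permVal π (j + 1 + 1) := fun h =>
    by have := permVal_inj π (by omega) (by omega) h; omega
  unfold dirs
  by_cases hx : permVal π (j + 1) < permVal π j <;>
    by_cases hy : permVal π (j + 1 + 1) < permVal π (j + 1) <;>
      simp [hx, hy] <;> omega

lemma ins_apply_self {n : ℕ} (π : Equiv.Perm (Fin n)) (i : Fin (n + 1)) :
    ins π i i = Fin.last n := by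
  simp [ins, finSuccEquiv'_at, finSuccEquiv'_symm_none]

lemma ins_apply_succAbove {n : ℕ} (π : Equiv.Perm (Fin n)) (i : Fin (n + 1)) (j : Fin n) :
    ins π i (i.succAbove j) = Fin.castSucc (π j) := by
  simp [ins, finSuccEquiv'_succAbove, finSuccEquiv'_symm_some, Fin.succAbove_last]

lemma ins_injective {n : ℕ} :
    Function.Injective (fun p : Equiv.Perm (Fin n) × Fin (n + 1) => ins p.1 p.2) := by
  rintro ⟨π, i⟩ ⟨π', i'⟩ h
  simp only at h
  have hi : i = i' := by
    have h1 : ins π i i = Fin.last n := ins_apply_self π i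
    have h2 : ins π' i' i' = Fin.last n := ins_apply_self π' i'
    have : ins π' i' i = Fin.last n := by rw [← h, h1]
    exact (ins π' i').injective (by rw [this, h2])
  subst hi
  have hπ : π = π' := by
    apply Equiv.ext
    intro j
    have h1 : ins π i (i.succAbove j) = Fin.castSucc (π j) := ins_apply_succAbove π i j
    have h2 : ins π' i (i.succAbove j) = Fin.castSucc (π' j) := ins_apply_succAbove π' i j
    rw [h] at h1
    rw [h1] at h2
    exact Fin.castSucc_injective n h2
  rw [hπ]

lemma ins_bijective {n : ℕ} :
    Function.Bijective (fun p : Equiv.Perm (Fin n) × Fin (n + 1) => ins p.1 p.2) := by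
  rw [Fintype.bijective_iff_injective_and_card]
  refine ⟨ins_injective, ?_⟩
  simp [Fintype.card_perm, Fintype.card_fin, Nat.factorial_succ, Nat.mul_comm]

lemma runs_lt {n : ℕ} (hn : 2 ≤ n) (π : Equiv.Perm (Fin n)) : runs n π < n := by
  rw [runs_eq_tc hn]
  have := tc_le (n - 1) (dirs π)
  omega

lemma Rpoly_eq_sum (n : ℕ) (hn : 2 ≤ n) :
    Rpoly n = ∑ π : Equiv.Perm (Fin n), X ^ (runs n π) := by
  unfold Rpoly R
  have hmap : ∀ π : Equiv.Perm (Fin n), π ∈ Finset.univ → runs n π ∈ Finset.range n :=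
    fun π _ => Finset.mem_range.mpr (runs_lt hn π)
  rw [← Finset.sum_fiberwise_of_maps_to hmap (fun π => (X : Polynomial ℝ) ^ (runs n π))]
  apply Finset.sum_congr rfl
  intro k _
  have : ∀ π ∈ Finset.univ.filter (fun π : Equiv.Perm (Fin n) => runs n π = k),
      (X : Polynomial ℝ) ^ (runs n π) = X ^ k := by
    intro π hπ
    simp only [Finset.mem_filter] at hπ
    rw [hπ.2]
  rw [Finset.sum_congr rfl this, Finset.sum_const, Polynomial.C_eq_natCast, nsmul_eq_mul]

lemma Rpoly_rec (n : ℕ) (hn : 2 ≤ n) :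
    Rpoly (n + 1) = (C 2 * X + C ((n : ℝ) - 1) * X ^ 2) * Rpoly n
      + X * (1 - X ^ 2) * (Polynomial.derivative (Rpoly n)) := by
  have h1 : Rpoly (n + 1) = ∑ π : Equiv.Perm (Fin n), ∑ i : Fin (n + 1),
      X ^ (runs (n + 1) (ins π i)) := by
    rw [Rpoly_eq_sum (n + 1) (by omega)]
    have hb := Fintype.sum_bijective _ (ins_bijective (n := n))
      (fun p : Equiv.Perm (Fin n) × Fin (n + 1) =>
        (X : Polynomial ℝ) ^ (runs (n + 1) (ins p.1 p.2)))
      (fun σ => (X : Polynomial ℝ) ^ (runs (n + 1) σ)) (fun p => rfl)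
    rw [← hb]
    exact Fintype.sum_prod_type _
  have h2 : ∀ (π : Equiv.Perm (Fin n)) (i : Fin (n + 1)),
      runs (n + 1) (ins π i) = 1 + tc n (spl (i : ℕ) (dirs π)) := by
    intro π i
    rw [runs_eq_tc (by omega) (ins π i)]
    congr 1
    have : (n + 1 - 1) = n := by omega
    rw [this]
    exact tc_congr n (fun j hj => dirs_ins π i hj)
  have h3 : ∀ π : Equiv.Perm (Fin n),
      (∑ i : Fin (n + 1), (X : Polynomial ℝ) ^ (1 + tc n (spl (i : ℕ) (dirs π))))
        = X * Spoly (n - 1) (dirs π) := by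
    intro π
    rw [Fin.sum_univ_eq_sum_range (fun i => (X : Polynomial ℝ) ^ (1 + tc n (spl i (dirs π))))]
    unfold Spoly
    rw [show n - 1 + 2 = n + 1 by omega, show n - 1 + 1 = n by omega, Finset.mul_sum]
    apply Finset.sum_congr rfl
    intro i _
    rw [pow_add, pow_one]
  have h4 : Rpoly n = ∑ π : Equiv.Perm (Fin n), X ^ (1 + tc (n - 1) (dirs π)) := by
    rw [Rpoly_eq_sum n hn]
    exact Finset.sum_congr rfl fun π _ => by rw [runs_eq_tc hn π]
  rw [h1, h4]
  have h5 : Polynomial.derivative (∑ π : Equiv.Perm (Fin n),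
      (X : Polynomial ℝ) ^ (1 + tc (n - 1) (dirs π)))
      = ∑ π : Equiv.Perm (Fin n), C ((1 + tc (n - 1) (dirs π) : ℕ) : ℝ)
          * X ^ (tc (n - 1) (dirs π)) := by
    rw [map_sum]
    apply Finset.sum_congr rfl
    intro π _
    rw [Polynomial.derivative_X_pow]
    congr 2
    omega
  rw [h5, Finset.mul_sum, Finset.mul_sum, ← Finset.sum_add_distrib]
  apply Finset.sum_congr rfl
  intro π _
  rw [Finset.sum_congr rfl (fun i (_ : i ∈ Finset.univ) => by rw [h2 π i]), h3 π,
    Spoly_eq (n - 1) (by omega) (dirs π)]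
  set T := tc (n - 1) (dirs π) with hT
  have hTle : T ≤ n - 2 := by have := tc_le (n - 1) (dirs π); omega
  have hc : ((n - 1 - 1 - T : ℕ) : ℝ) = (n : ℝ) - 2 - T := by
    rw [show n - 1 - 1 - T = n - (2 + T) by omega, Nat.cast_sub (by omega)]
    push_cast; ring
  have hc2 : ((1 + T : ℕ) : ℝ) = 1 + (T : ℝ) := by push_cast; ring
  rw [hc, hc2, pow_add, pow_one]
  simp only [map_add, map_sub, map_one, map_ofNat, Polynomial.C_eq_natCast]
  push_cast
  ring

lemma P_succ (n : ℕ) : P (n + 1) = (1 + X ^ 2) * (P n).derivative := rfl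

lemma P_natDegree_le (n : ℕ) : (P n).natDegree ≤ n + 1 := by
  induction n with
  | zero => simpa [P] using Polynomial.natDegree_X_le
  | succ n ih =>
    rw [P_succ]
    calc ((1 + X ^ 2 : Polynomial ℝ) * (P n).derivative).natDegree
        ≤ (1 + X ^ 2 : Polynomial ℝ).natDegree + (P n).derivative.natDegree :=
          Polynomial.natDegree_mul_le
      _ ≤ n + 2 := by
          have h1 : (1 + X ^ 2 : Polynomial ℝ).natDegree ≤ 2 := by
            compute_degree
          have h2 := Polynomial.natDegree_derivative_le (P n)
          omega

lemma P_coeff_zero_of_gt {n j : ℕ} (h : n + 1 < j) : (P n).coeff j = 0 :=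
  Polynomial.coeff_eq_zero_of_natDegree_lt (lt_of_le_of_lt (P_natDegree_le n) h)

lemma P_coeff_rec (n j : ℕ) (hj : 1 ≤ j) :
    (P (n + 1)).coeff j
      = ((j : ℝ) + 1) * (P n).coeff (j + 1) + ((j : ℝ) - 1) * (P n).coeff (j - 1) := by
  rw [P_succ, add_mul, one_mul, Polynomial.coeff_add, Polynomial.coeff_derivative,
    Polynomial.coeff_X_pow_mul']
  rcases Nat.lt_or_ge j 2 with h | h
  · have hj1 : j = 1 := by omega
    subst hj1
    norm_num
    ring
  · rw [if_pos h, Polynomial.coeff_derivative, show j - 2 + 1 = j - 1 by omega]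
    have e2 : ((j - 2 : ℕ) : ℝ) + 1 = (j : ℝ) - 1 := by
      rw [Nat.cast_sub (by omega)]; push_cast; ring
    rw [e2]
    ring

lemma P_coeff_zero (n : ℕ) : (P (n + 1)).coeff 0 = (P n).coeff 1 := by
  rw [P_succ, add_mul, one_mul, Polynomial.coeff_add, Polynomial.coeff_derivative,
    Polynomial.coeff_X_pow_mul']
  norm_num

lemma coeff_id (n m : ℕ) (hn : 2 ≤ n) (hm : m ≤ (n+1)/2 + 2) :
    (if m ≤ (n+2)/2 then (P (n+1)).coeff (n+2-2*m) else 0)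
      - (if 1 ≤ m ∧ m ≤ (n+2)/2 + 1 then (P (n+1)).coeff (n+2-2*(m-1)) else 0)
    = (if m ≤ (n+1)/2 then ((n:ℝ)+1-2*m) * (P n).coeff (n+1-2*m) else 0)
      - (if 2 ≤ m ∧ m ≤ (n+1)/2 + 2 then ((n:ℝ)+5-2*m) * (P n).coeff (n+1-2*(m-2)) else 0) := by
  set K := (n+1)/2 with hK
  set K' := (n+2)/2 with hK'
  have hKK' : K ≤ K' ∧ K' ≤ K + 1 ∧ 1 ≤ K ∧ K ≤ n - 1 ∧ 2*K ≤ n+1 ∧ n+1 ≤ 2*K+1 ∧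
      2*K' ≤ n+2 ∧ n+2 ≤ 2*K'+1 := by omega
  rcases Nat.lt_or_ge K m with hm1 | hm1
  · -- m ≥ K+1 : m = K+1 or K+2
    have h3 : ¬ (m ≤ K) := by omega
    have h4 : 2 ≤ m ∧ m ≤ K + 2 := by omega
    rw [if_neg h3, if_pos h4]
    rcases Nat.even_or_odd n with he | ho
    · -- n even: n = 2K, K' = K+1
      have h2K : n = 2 * K ∧ K' = K + 1 := by
        rcases he with ⟨t, ht⟩; omega
      rcases Nat.lt_or_ge m (K+2) with hm2 | hm2
      · -- m = K+1 = K'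
        have hmK : m = K + 1 := by omega
        have i1 : m ≤ K' := by omega
        have i2 : 1 ≤ m ∧ m ≤ K' + 1 := by omega
        rw [if_pos i1, if_pos i2]
        have e1 : n + 2 - 2*m = 0 := by omega
        have e2 : n + 2 - 2*(m-1) = 2 := by omega
        have e3 : n + 1 - 2*(m-2) = 3 := by omega
        rw [e1, e2, e3, P_coeff_zero, P_coeff_rec n 2 (by omega)]
        have e4 : (P n).coeff (2+1) = (P n).coeff 3 := rfl
        have e5 : (P n).coeff (2-1) = (P n).coeff 1 := rfl
        rw [e4, e5]
        have e6 : ((n:ℝ) + 5 - 2*m) = 3 := by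
          have h1 : (m:ℝ) = (K:ℝ) + 1 := by rw [hmK]; push_cast; ring
          have h2 : (n:ℝ) = 2*(K:ℝ) := by rw [h2K.1]; push_cast; ring
          rw [h1, h2]; ring
        rw [e6]; norm_num
      · -- m = K+2 = K'+1
        have hmK : m = K + 2 := by omega
        have i1 : ¬ (m ≤ K') := by omega
        have i2 : 1 ≤ m ∧ m ≤ K' + 1 := by omega
        rw [if_neg i1, if_pos i2]
        have e2 : n + 2 - 2*(m-1) = 0 := by omega
        have e3 : n + 1 - 2*(m-2) = 1 := by omega
        rw [e2, e3, P_coeff_zero]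
        have e6 : ((n:ℝ) + 5 - 2*m) = 1 := by
          have h1 : (m:ℝ) = (K:ℝ) + 2 := by rw [hmK]; push_cast; ring
          have h2 : (n:ℝ) = 2*(K:ℝ) := by rw [h2K.1]; push_cast; ring
          rw [h1, h2]; ring
        rw [e6]; ring
    · -- n odd: n+1 = 2K, K' = K
      have h2K : n + 1 = 2 * K ∧ K' = K := by
        rcases ho with ⟨t, ht⟩; omega
      rcases Nat.lt_or_ge m (K+2) with hm2 | hm2
      · -- m = K+1 = K'+1
        have hmK : m = K + 1 := by omega
        have i1 : ¬ (m ≤ K') := by omega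
        have i2 : 1 ≤ m ∧ m ≤ K' + 1 := by omega
        rw [if_neg i1, if_pos i2]
        have e2 : n + 2 - 2*(m-1) = 1 := by omega
        have e3 : n + 1 - 2*(m-2) = 2 := by omega
        rw [e2, e3, P_coeff_rec n 1 (by omega)]
        have e4 : (P n).coeff (1+1) = (P n).coeff 2 := rfl
        rw [e4]
        have e6 : ((n:ℝ) + 5 - 2*m) = 2 := by
          have h1 : (m:ℝ) = (K:ℝ) + 1 := by rw [hmK]; push_cast; ring
          have h2 : (n:ℝ) + 1 = 2*(K:ℝ) := by
            have := h2K.1; exact_mod_cast congrArg (fun x : ℕ => (x:ℝ)) this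
          rw [h1]; linarith
        rw [e6]; push_cast; ring
      · -- m = K+2, RHS second coeff has factor zero
        have hmK : m = K + 2 := by omega
        have i1 : ¬ (m ≤ K') := by omega
        have i2 : ¬ (1 ≤ m ∧ m ≤ K' + 1) := by omega
        rw [if_neg i1, if_neg i2]
        have e6 : ((n:ℝ) + 5 - 2*m) = 0 := by
          have h1 : (m:ℝ) = (K:ℝ) + 2 := by rw [hmK]; push_cast; ring
          have h2 : (n:ℝ) + 1 = 2*(K:ℝ) := by
            have := h2K.1; exact_mod_cast congrArg (fun x : ℕ => (x:ℝ)) this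
          rw [h1]; linarith
        rw [e6]; ring
  · -- m ≤ K
    have i1 : m ≤ K' := by omega
    rw [if_pos hm1, if_pos i1]
    rcases Nat.eq_zero_or_pos m with hm0 | hm0
    · subst hm0
      have i2 : ¬ ((1:ℕ) ≤ 0 ∧ (0:ℕ) ≤ K' + 1) := by omega
      have i3 : ¬ ((2:ℕ) ≤ 0 ∧ (0:ℕ) ≤ K + 2) := by omega
      rw [if_neg i2, if_neg i3]
      have e1 : n + 2 - 2*0 = n + 2 := by omega
      have e2 : n + 1 - 2*0 = n + 1 := by omega
      rw [e1, e2, P_coeff_rec n (n+2) (by omega)]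
      rw [P_coeff_zero_of_gt (show n + 1 < n+2+1 by omega)]
      have e3 : n + 2 - 1 = n + 1 := by omega
      rw [e3]
      push_cast; ring
    · have i2 : 1 ≤ m ∧ m ≤ K' + 1 := by omega
      rw [if_pos i2]
      have hj1 : 1 ≤ n + 2 - 2*m := by omega
      have hj2 : 1 ≤ n + 2 - 2*(m-1) := by omega
      rw [P_coeff_rec n _ hj1, P_coeff_rec n _ hj2]
      have e1 : n + 2 - 2*m + 1 = n + 1 - 2*(m-1) := by omega
      have e2 : n + 2 - 2*m - 1 = n + 1 - 2*m := by omega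
      have e3 : n + 2 - 2*(m-1) - 1 = n + 1 - 2*(m-1) := by omega
      rw [e1, e2, e3]
      have c1 : ((n + 2 - 2*m : ℕ) : ℝ) = (n:ℝ) + 2 - 2*m := by
        rw [Nat.cast_sub (by omega)]; push_cast; ring
      have c2 : ((n + 2 - 2*(m-1) : ℕ) : ℝ) = (n:ℝ) + 4 - 2*m := by
        rw [show n + 2 - 2*(m-1) = n + 4 - 2*m by omega, Nat.cast_sub (by omega)]
        push_cast; ring
      rw [c1, c2]
      rcases Nat.lt_or_ge m 2 with hm2 | hm2
      · -- m = 1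
        have hm1' : m = 1 := by omega
        subst hm1'
        have i3 : ¬ ((2:ℕ) ≤ 1 ∧ (1:ℕ) ≤ K + 2) := by omega
        rw [if_neg i3]
        have e4 : n + 2 - 2*(1-1) + 1 = n + 3 := by omega
        rw [e4, P_coeff_zero_of_gt (show n + 1 < n + 3 by omega)]
        push_cast; ring
      · -- 2 ≤ m ≤ K
        have i3 : 2 ≤ m ∧ m ≤ K + 2 := by omega
        rw [if_pos i3]
        have e4 : n + 2 - 2*(m-1) + 1 = n + 1 - 2*(m-2) := by omega
        rw [e4]
        ring
lemma der_C_mul (a : ℝ) (p : Polynomial ℝ) :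
    Polynomial.derivative (C a * p) = C a * Polynomial.derivative p := by
  rw [Polynomial.derivative_mul, Polynomial.derivative_C, zero_mul, zero_add]

lemma ringI (a k : ℕ) :
    C (4 : ℝ) * ((C 2 * X + (C (a : ℝ) + C (k : ℝ)) * X ^ 2) * ((X + 1) ^ a * (X - 1) ^ k)
      + X * (1 - X ^ 2) * Polynomial.derivative ((X + 1) ^ a * (X - 1) ^ k))
    = (C (a : ℝ) - C (k : ℝ) + C 2) *
        ((X + 1) ^ (a + 2) * (X - 1) ^ k - (X + 1) ^ a * (X - 1) ^ (k + 2)) := by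
  rw [Polynomial.derivative_mul, Polynomial.derivative_pow, Polynomial.derivative_pow]
  simp only [Polynomial.derivative_add, Polynomial.derivative_sub, Polynomial.derivative_X,
    Polynomial.derivative_one, add_zero, sub_zero, mul_one, Polynomial.C_eq_natCast, map_ofNat]
  rcases a with _ | a <;> rcases k with _ | k <;>
    · push_cast
      try simp only [pow_zero, Nat.add_sub_cancel, Nat.zero_sub, Nat.cast_zero, Nat.sub_zero]
      ring

lemma sum_pad (N K : ℕ) (h : K ≤ N) (g : ℕ → Polynomial ℝ) :
    ∑ k ∈ Finset.range (K + 1), g k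
      = ∑ m ∈ Finset.range (N + 1), if m ≤ K then g m else 0 := by
  have h1 : ∑ k ∈ Finset.range (K + 1), g k
      = ∑ k ∈ Finset.range (K + 1), (if k ≤ K then g k else 0) := by
    apply Finset.sum_congr rfl
    intro k hk
    simp only [Finset.mem_range] at hk
    rw [if_pos (by omega)]
  rw [h1]
  apply Finset.sum_subset (Finset.range_subset_range.mpr (by omega))
  intro x _ hx
  simp only [Finset.mem_range, not_lt] at hx
  rw [if_neg (by omega)]

lemma sum_shift (N K c : ℕ) (hc : K + c ≤ N) (g : ℕ → Polynomial ℝ) :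
    ∑ k ∈ Finset.range (K + 1), g (k + c)
      = ∑ m ∈ Finset.range (N + 1), if c ≤ m ∧ m ≤ K + c then g m else 0 := by
  have z1 : ∑ m ∈ Finset.Ico 0 c, (if c ≤ m ∧ m ≤ K + c then g m else 0) = 0 :=
    Finset.sum_eq_zero fun m hm => by
      simp only [Finset.mem_Ico] at hm; rw [if_neg (by omega)]
  have z2 : ∑ m ∈ Finset.Ico (K + c + 1) (N + 1), (if c ≤ m ∧ m ≤ K + c then g m else 0) = 0 :=
    Finset.sum_eq_zero fun m hm => by
      simp only [Finset.mem_Ico] at hm; rw [if_neg (by omega)]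
  have h1 : ∑ m ∈ Finset.range (N + 1), (if c ≤ m ∧ m ≤ K + c then g m else 0)
      = ∑ m ∈ Finset.Ico c (K + c + 1), (if c ≤ m ∧ m ≤ K + c then g m else 0) := by
    rw [Finset.range_eq_Ico,
      ← Finset.sum_Ico_consecutive _ (Nat.zero_le c) (by omega : c ≤ N + 1),
      ← Finset.sum_Ico_consecutive _ (by omega : c ≤ K + c + 1) (by omega : K + c + 1 ≤ N + 1),
      z1, z2, zero_add, add_zero]
  rw [h1, Finset.sum_Ico_eq_sum_range, show K + c + 1 - c = K + 1 by omega]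
  apply Finset.sum_congr rfl
  intro k hk
  simp only [Finset.mem_range] at hk
  rw [if_pos (by omega), show c + k = k + c by omega]

noncomputable def Qs (n : ℕ) : Polynomial ℝ :=
  ∑ k ∈ Finset.range ((n + 1) / 2 + 1),
    C ((P n).coeff (n + 1 - 2 * k)) * (X + 1) ^ (n - k - 1) * (X - 1) ^ k

lemma ALG (n : ℕ) (hn : 2 ≤ n) :
    C (2 : ℝ) * Qs (n + 1)
      = C 4 * ((C 2 * X + C ((n : ℝ) - 1) * X ^ 2) * Qs n
          + X * (1 - X ^ 2) * Polynomial.derivative (Qs n)) := by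
  have key1 : C (2:ℝ) * Qs (n+1)
      = (∑ m ∈ Finset.range ((n+2)/2 + 1), C ((P (n+1)).coeff (n + 2 - 2*m))
          * ((X + 1) ^ (n + 1 - m) * (X - 1) ^ m))
        - (∑ m ∈ Finset.range ((n+2)/2 + 1), C ((P (n+1)).coeff (n + 2 - 2*m))
          * ((X + 1) ^ (n + 1 - (m+1)) * (X - 1) ^ (m+1))) := by
    have hQ' : Qs (n+1) = ∑ m ∈ Finset.range ((n+2)/2 + 1),
        C ((P (n+1)).coeff (n + 2 - 2*m)) * ((X + 1) ^ (n - m) * (X - 1) ^ m) := by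
      unfold Qs
      rw [show n + 1 + 1 = n + 2 from rfl]
      apply Finset.sum_congr rfl
      intro m hm
      rw [show n + 1 - m - 1 = n - m by omega, mul_assoc]
    rw [hQ', Finset.mul_sum, ← Finset.sum_sub_distrib]
    apply Finset.sum_congr rfl
    intro m hm
    simp only [Finset.mem_range] at hm
    have hmn : m ≤ n := by omega
    rw [show n + 1 - m = (n - m) + 1 by omega, show n + 1 - (m+1) = n - m by omega,
      map_ofNat]
    ring
  have key2 : C (4:ℝ) * ((C 2 * X + C ((n : ℝ) - 1) * X ^ 2) * Qs n
          + X * (1 - X ^ 2) * Polynomial.derivative (Qs n))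
      = (∑ k ∈ Finset.range ((n+1)/2 + 1),
          (C ((P n).coeff (n + 1 - 2*k)) * (C (((n-k-1 : ℕ) : ℝ)) - C ((k:ℝ)) + C 2))
            * ((X + 1) ^ (n + 1 - k) * (X - 1) ^ k))
        - (∑ k ∈ Finset.range ((n+1)/2 + 1),
          (C ((P n).coeff (n + 1 - 2*k)) * (C (((n-k-1 : ℕ) : ℝ)) - C ((k:ℝ)) + C 2))
            * ((X + 1) ^ (n + 1 - (k+2)) * (X - 1) ^ (k+2))) := by
    have hder : Polynomial.derivative (Qs n) = ∑ k ∈ Finset.range ((n+1)/2 + 1),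
        C ((P n).coeff (n + 1 - 2*k))
          * Polynomial.derivative ((X + 1) ^ (n - k - 1) * (X - 1) ^ k) := by
      unfold Qs
      rw [map_sum]
      apply Finset.sum_congr rfl
      intro k _
      rw [mul_assoc, der_C_mul]
    rw [hder]
    unfold Qs
    rw [Finset.mul_sum, Finset.mul_sum, ← Finset.sum_add_distrib, Finset.mul_sum,
      ← Finset.sum_sub_distrib]
    apply Finset.sum_congr rfl
    intro k hk
    simp only [Finset.mem_range] at hk
    have hkn : k ≤ n - 1 := by omega
    have hcast : C ((n:ℝ) - 1) = C (((n-k-1 : ℕ) : ℝ)) + C ((k:ℝ)) := by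
      rw [← map_add]
      congr 1
      rw [show n - k - 1 = n - (k+1) by omega, Nat.cast_sub (by omega)]
      push_cast; ring
    have step1 : (C 2 * X + C ((n : ℝ) - 1) * X ^ 2)
          * (C ((P n).coeff (n + 1 - 2*k)) * (X + 1) ^ (n - k - 1) * (X - 1) ^ k)
        + X * (1 - X ^ 2) * (C ((P n).coeff (n + 1 - 2*k))
            * Polynomial.derivative ((X + 1) ^ (n - k - 1) * (X - 1) ^ k))
        = C ((P n).coeff (n + 1 - 2*k)) *
            ((C 2 * X + (C (((n-k-1 : ℕ) : ℝ)) + C ((k:ℝ))) * X ^ 2)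
              * ((X + 1) ^ (n - k - 1) * (X - 1) ^ k)
            + X * (1 - X ^ 2)
              * Polynomial.derivative ((X + 1) ^ (n - k - 1) * (X - 1) ^ k)) := by
      rw [← hcast]
      ring
    rw [step1, mul_left_comm, ringI (n - k - 1) k]
    rw [show n - k - 1 + 2 = n + 1 - k by omega, show n + 1 - (k+2) = n - k - 1 by omega]
    ring
  rw [key1, key2]
  have pad1 := sum_pad ((n+1)/2 + 2) ((n+2)/2) (by omega)
    (fun m => C ((P (n+1)).coeff (n + 2 - 2*m)) * ((X + 1) ^ (n + 1 - m) * (X - 1) ^ m))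
  have pad2 := sum_pad ((n+1)/2 + 2) ((n+1)/2) (by omega)
    (fun k => (C ((P n).coeff (n + 1 - 2*k)) * (C (((n-k-1 : ℕ) : ℝ)) - C ((k:ℝ)) + C 2))
      * ((X + 1) ^ (n + 1 - k) * (X - 1) ^ k))
  have sh1 := sum_shift ((n+1)/2 + 2) ((n+2)/2) 1 (by omega)
    (fun m => C ((P (n+1)).coeff (n + 2 - 2*(m-1))) * ((X + 1) ^ (n + 1 - m) * (X - 1) ^ m))
  have sh2 := sum_shift ((n+1)/2 + 2) ((n+1)/2) 2 (by omega)
    (fun m => (C ((P n).coeff (n + 1 - 2*(m-2)))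
        * (C (((n-(m-2)-1 : ℕ) : ℝ)) - C (((m-2 : ℕ):ℝ)) + C 2))
      * ((X + 1) ^ (n + 1 - m) * (X - 1) ^ m))
  have e1 : ∑ m ∈ Finset.range ((n+2)/2 + 1), C ((P (n+1)).coeff (n + 2 - 2*m))
      * ((X + 1) ^ (n + 1 - (m+1)) * (X - 1) ^ (m+1))
      = ∑ m ∈ Finset.range ((n+2)/2 + 1),
        C ((P (n+1)).coeff (n + 2 - 2*(m + 1 - 1))) * ((X + 1) ^ (n + 1 - (m+1)) * (X - 1) ^ (m+1)) := by
    apply Finset.sum_congr rfl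
    intro m _
    rw [show m + 1 - 1 = m from rfl]
  have e2 : ∑ k ∈ Finset.range ((n+1)/2 + 1),
      (C ((P n).coeff (n + 1 - 2*k)) * (C (((n-k-1 : ℕ) : ℝ)) - C ((k:ℝ)) + C 2))
        * ((X + 1) ^ (n + 1 - (k+2)) * (X - 1) ^ (k+2))
      = ∑ k ∈ Finset.range ((n+1)/2 + 1),
      (C ((P n).coeff (n + 1 - 2*(k + 2 - 2)))
          * (C (((n-(k + 2 - 2)-1 : ℕ) : ℝ)) - C (((k + 2 - 2 : ℕ):ℝ)) + C 2))
        * ((X + 1) ^ (n + 1 - (k+2)) * (X - 1) ^ (k+2)) := by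
    apply Finset.sum_congr rfl
    intro k _
    rw [show k + 2 - 2 = k from rfl]
  rw [e1, e2, pad1, pad2, sh1, sh2, ← Finset.sum_sub_distrib, ← Finset.sum_sub_distrib]
  apply Finset.sum_congr rfl
  intro m hm
  simp only [Finset.mem_range] at hm
  -- pointwise identity
  have f1 : (if m ≤ (n+2)/2 then C ((P (n+1)).coeff (n + 2 - 2*m))
        * ((X + 1) ^ (n + 1 - m) * (X - 1) ^ m) else 0)
      = C (if m ≤ (n+2)/2 then (P (n+1)).coeff (n + 2 - 2*m) else 0)
        * ((X + 1) ^ (n + 1 - m) * (X - 1) ^ m) := by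
    split_ifs <;> simp
  have f2 : (if 1 ≤ m ∧ m ≤ (n+2)/2 + 1 then C ((P (n+1)).coeff (n + 2 - 2*(m-1)))
        * ((X + 1) ^ (n + 1 - m) * (X - 1) ^ m) else 0)
      = C (if 1 ≤ m ∧ m ≤ (n+2)/2 + 1 then (P (n+1)).coeff (n + 2 - 2*(m-1)) else 0)
        * ((X + 1) ^ (n + 1 - m) * (X - 1) ^ m) := by
    split_ifs <;> simp
  have f3 : (if m ≤ (n+1)/2 then (C ((P n).coeff (n + 1 - 2*m))
        * (C (((n-m-1 : ℕ) : ℝ)) - C ((m:ℝ)) + C 2))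
        * ((X + 1) ^ (n + 1 - m) * (X - 1) ^ m) else 0)
      = C (if m ≤ (n+1)/2 then ((n:ℝ)+1-2*m) * (P n).coeff (n+1-2*m) else 0)
        * ((X + 1) ^ (n + 1 - m) * (X - 1) ^ m) := by
    split_ifs with h
    · have hmn : m ≤ n - 1 := by omega
      have hg : C ((n:ℝ)+1-2*m) = C (((n-m-1 : ℕ) : ℝ)) - C ((m:ℝ)) + C 2 := by
        rw [← map_sub, ← map_add]
        congr 1
        rw [show n - m - 1 = n - (m+1) by omega, Nat.cast_sub (by omega)]
        push_cast; ring
      rw [map_mul, hg]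
      ring
    · simp
  have f4 : (if 2 ≤ m ∧ m ≤ (n+1)/2 + 2 then (C ((P n).coeff (n + 1 - 2*(m-2)))
        * (C (((n-(m-2)-1 : ℕ) : ℝ)) - C (((m-2 : ℕ):ℝ)) + C 2))
        * ((X + 1) ^ (n + 1 - m) * (X - 1) ^ m) else 0)
      = C (if 2 ≤ m ∧ m ≤ (n+1)/2 + 2 then ((n:ℝ)+5-2*m) * (P n).coeff (n+1-2*(m-2)) else 0)
        * ((X + 1) ^ (n + 1 - m) * (X - 1) ^ m) := by
    split_ifs with h
    · have hmn : m - 2 ≤ n - 1 := by omega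
      have hg : C ((n:ℝ)+5-2*m) = C (((n-(m-2)-1 : ℕ) : ℝ)) - C (((m-2:ℕ)):ℝ) + C 2 := by
        rw [← map_sub, ← map_add]
        congr 1
        rw [show n - (m-2) - 1 = n - (m-1) by omega, Nat.cast_sub (by omega),
          Nat.cast_sub (by omega : 2 ≤ m), Nat.cast_sub (by omega : 1 ≤ m)]
        push_cast; ring
      rw [map_mul, hg]
      ring
    · simp
  rw [f1, f2, f3, f4, ← sub_mul, ← sub_mul, ← map_sub, ← map_sub,
    coeff_id n m hn (by omega)]

lemma P1_eq : P 1 = 1 + X ^ 2 := by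
  rw [P_succ, show P 0 = X from rfl]
  simp

lemma P2_eq : P 2 = C 2 * X + C 2 * X ^ 3 := by
  rw [P_succ, P1_eq]
  simp [Polynomial.derivative_X_pow]
  simp only [map_ofNat]
  ring

lemma base_case : Rpoly 2 = C (((2:ℝ) ^ (2 - 1))⁻¹) * Qs 2 := by
  have hR0 : R 2 0 = 0 := by decide
  have hR1 : R 2 1 = 2 := by decide
  have hc3 : (P 2).coeff 3 = 2 := by
    rw [P2_eq]
    simp [Polynomial.coeff_add, Polynomial.coeff_C_mul, Polynomial.coeff_X, coeff_X_pow]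
  have hc1 : (P 2).coeff 1 = 2 := by
    rw [P2_eq]
    simp [Polynomial.coeff_add, Polynomial.coeff_C_mul, Polynomial.coeff_X, coeff_X_pow]
  unfold Rpoly Qs
  rw [show ((2:ℕ)+1)/2 + 1 = 2 from rfl]
  rw [Finset.sum_range_succ, Finset.sum_range_succ, Finset.sum_range_succ,
    Finset.sum_range_succ, Finset.sum_range_zero, Finset.sum_range_zero]
  norm_num [hR0, hR1, hc3, hc1, map_ofNat]
  have h42 : C ((1:ℝ)/2) * 4 = (2 : Polynomial ℝ) := by
    rw [show (4 : Polynomial ℝ) = C (4:ℝ) from (map_ofNat C 4).symm, ← map_mul,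
      show (1:ℝ)/2*4 = 2 by norm_num]
    exact map_ofNat C 2
  rw [show (2 * (X + 1) + 2 * (X - 1) : Polynomial ℝ) = 4 * X by ring, ← mul_assoc, h42]

theorem Rpoly_expansion' (n : ℕ) (hn : 2 ≤ n) :
    Rpoly n = C (((2:ℝ) ^ (n - 1))⁻¹) * Qs n := by
  induction n, hn using Nat.le_induction with
  | base => exact base_case
  | succ n hn ih =>
    rw [Rpoly_rec n hn, ih, der_C_mul]
    have h4 : ((C 2 * X + C ((n : ℝ) - 1) * X ^ 2) * Qs n
        + X * (1 - X ^ 2) * Polynomial.derivative (Qs n))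
        = C ((4:ℝ)⁻¹) * (C (2:ℝ) * Qs (n+1)) := by
      rw [ALG n hn, ← mul_assoc, ← map_mul]
      norm_num
    have expand : (C 2 * X + C ((n : ℝ) - 1) * X ^ 2) * (C (((2:ℝ) ^ (n - 1))⁻¹) * Qs n)
        + X * (1 - X ^ 2) * (C (((2:ℝ) ^ (n - 1))⁻¹) * Polynomial.derivative (Qs n))
        = C (((2:ℝ) ^ (n - 1))⁻¹) * ((C 2 * X + C ((n : ℝ) - 1) * X ^ 2) * Qs n
            + X * (1 - X ^ 2) * Polynomial.derivative (Qs n)) := by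
      ring
    rw [expand, h4, ← mul_assoc, ← map_mul, ← mul_assoc, ← map_mul]
    congr 2
    rw [show n + 1 - 1 = (n - 1) + 1 by omega, pow_succ]
    norm_num
    ring

end RunsProof

/-- `R_n(x) = 2^{-(n-1)} ∑_{k=0}^{⌊(n+1)/2⌋} p(n, n-2k+1) (x+1)^{n-k-1} (x-1)^k`. -/
theorem Rpoly_expansion (n : ℕ) (hn : 2 ≤ n) :
    Rpoly n =
      Polynomial.C (((2 : ℝ) ^ (n - 1))⁻¹) *
        ∑ k ∈ Finset.range ((n + 1) / 2 + 1),
          Polynomial.C ((P n).coeff (n + 1 - 2 * k)) *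
            (Polynomial.X + 1) ^ (n - k - 1) * (Polynomial.X - 1) ^ k := by
  rw [RunsProof.Rpoly_expansion' n hn]
  rfl
end

section
/- For every n ≥ 2, the polynomial R_n(x) = Σ_{k=1}^{n-1} R(n,k) x^k is divisible by (x+1)^{⌊n/2⌋ - 1}. -/
open Polynomial Finset

namespace RunsAux

def chgp (M : ℕ) (w : ℕ → Bool) : ℕ :=
  ∑ i ∈ Finset.range M, if w i ≠ w (i + 1) then 1 else 0

def insw (w : ℕ → Bool) (p : ℕ) : ℕ → Bool := fun i =>
  if i + 1 < p then w i else if i + 1 = p then false else if i = p then true else w (i - 1)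

def dlt (m : ℕ) (w : ℕ → Bool) (p : ℕ) : ℕ :=
  if p = 0 then (if w 0 then 0 else 1)
  else if p = m + 2 then (if w m then 1 else 0)
  else if p = 1 then (if m = 0 then 1 else if w 0 then 1 else if w 1 then 0 else 2)
  else if p = m + 1 then (if w m then (if w (m - 1) then 2 else 0) else 1)
  else (if w (p - 1) then (if w (p - 2) then 2 else 0) else (if w p then 0 else 2))

lemma sum_shift (f : ℕ → ℕ) (a b : ℕ) :
    ∑ i ∈ Finset.Ico (a + 1) (b + 1), f (i - 1) = ∑ i ∈ Finset.Ico a b, f i := by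
  rw [Finset.sum_Ico_eq_sum_range, Finset.sum_Ico_eq_sum_range]
  have hb : b + 1 - (a + 1) = b - a := by omega
  rw [hb]
  exact Finset.sum_congr rfl fun i _ => by congr 1; omega

lemma sum_Ico_three (f : ℕ → ℕ) (a : ℕ) :
    ∑ i ∈ Finset.Ico a (a + 3), f i = f a + f (a + 1) + f (a + 2) := by
  rw [Finset.sum_Ico_eq_sum_range]
  have : a + 3 - a = 3 := by omega
  rw [this]
  simp [Finset.sum_range_succ]

lemma sum_Ico_two (f : ℕ → ℕ) (a : ℕ) :
    ∑ i ∈ Finset.Ico a (a + 2), f i = f a + f (a + 1) := by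
  rw [Finset.sum_Ico_eq_sum_range]
  have : a + 2 - a = 2 := by omega
  rw [this]
  simp [Finset.sum_range_succ]

lemma insw_chg (m : ℕ) (w : ℕ → Bool) (p : ℕ) (hp : p ≤ m + 2) :
    chgp (m + 1) (insw w p) = chgp m w + dlt m w p := by
  have hvlt : ∀ i, i + 1 < p → insw w p i = w i := fun i hi => by simp [insw, hi]
  have hveq : ∀ i, i + 1 = p → insw w p i = false := fun i hi => by
    simp [insw, hi]
  have hvp : insw w p p = true := by simp [insw]
  have hvgt : ∀ i, p < i → insw w p i = w (i - 1) := fun i hi => by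
    have h1 : ¬ (i + 1 < p) := by omega
    have h2 : ¬ (i + 1 = p) := by omega
    have h3 : ¬ (i = p) := by omega
    simp [insw, h1, h2, h3]
  rcases Nat.eq_zero_or_pos p with hp0 | hp1
  · -- p = 0
    subst hp0
    unfold chgp
    rw [Finset.sum_range_succ']
    have e1 : ∀ i ∈ Finset.range m,
        (if insw w 0 (i+1) ≠ insw w 0 (i+1+1) then 1 else 0)
          = if w i ≠ w (i+1) then 1 else 0 := by
      intro i _
      rw [hvgt (i+1) (by omega), hvgt (i+2) (by omega)]
      simp
    rw [Finset.sum_congr rfl e1, hvp, hvgt 1 (by omega)]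
    unfold dlt
    simp only [if_pos rfl]
    cases h0 : w 0 <;> simp
  rcases Nat.lt_or_ge p (m+2) with hplt | hpge
  swap
  · -- p = m + 2
    have hpm : p = m + 2 := by omega
    subst hpm
    unfold chgp
    rw [Finset.sum_range_succ]
    have e1 : ∀ i ∈ Finset.range m,
        (if insw w (m+2) i ≠ insw w (m+2) (i+1) then 1 else 0)
          = if w i ≠ w (i+1) then 1 else 0 := by
      intro i hi
      rw [Finset.mem_range] at hi
      rw [hvlt i (by omega), hvlt (i+1) (by omega)]
    rw [Finset.sum_congr rfl e1, hvlt m (by omega), hveq (m+1) (by omega)]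
    unfold dlt
    have h2 : (m:ℕ) + 2 ≠ 0 := by omega
    rw [if_neg h2, if_pos rfl]
    cases hm : w m <;> simp
  rcases Nat.lt_or_ge p 2 with hp2 | hp2
  · -- p = 1
    have hp1' : p = 1 := by omega
    subst hp1'
    rcases Nat.eq_zero_or_pos m with hm0 | hm1
    · subst hm0
      have h0 : insw w 1 0 = false := hveq 0 rfl
      unfold chgp dlt
      simp [h0, hvp]
    · -- m ≥ 1
      obtain ⟨m', rfl⟩ : ∃ m', m = m' + 1 := ⟨m - 1, by omega⟩
      unfold chgp
      rw [Finset.sum_range_succ', Finset.sum_range_succ']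
      have e1 : ∀ i ∈ Finset.range m',
          (if insw w 1 (i+1+1) ≠ insw w 1 (i+1+1+1) then 1 else 0)
            = if w (i+1) ≠ w (i+1+1) then 1 else 0 := by
        intro i _
        rw [hvgt (i+2) (by omega), hvgt (i+3) (by omega)]
        have h4 : i + 2 - 1 = i + 1 := by omega
        have h5 : i + 3 - 1 = i + 2 := by omega
        rw [show i+1+1 = i+2 by omega, show i+1+1+1 = i+3 by omega, h4, h5]
      rw [Finset.sum_congr rfl e1]
      rw [hveq 0 rfl, hvp, hvgt 2 (by omega)]
      conv_rhs => rw [Finset.sum_range_succ']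
      unfold dlt
      simp only [if_neg (by omega : (1:ℕ) ≠ 0), if_neg (by omega : (1:ℕ) ≠ m' + 1 + 2),
        if_pos rfl, if_neg (by omega : m' + 1 ≠ 0)]
      cases h0 : w 0 <;> cases h1 : w 1 <;> simp [h0, h1] <;> omega
  rcases Nat.lt_or_ge p (m+1) with hpmid | hptop
  · -- 2 ≤ p ≤ m
    obtain ⟨q, rfl⟩ : ∃ q, p = q + 2 := ⟨p - 2, by omega⟩
    obtain ⟨s, rfl⟩ : ∃ s, m = q + 2 + s := ⟨m - q - 2, by omega⟩
    unfold chgp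
    simp only [Finset.range_eq_Ico]
    rw [← Finset.sum_Ico_consecutive _ (by omega : 0 ≤ q) (by omega : q ≤ q+2+s+1)]
    rw [← Finset.sum_Ico_consecutive _ (by omega : q ≤ q+3) (by omega : q+3 ≤ q+2+s+1)]
    have e1 : ∀ i ∈ Finset.Ico 0 q,
        (if insw w (q+2) i ≠ insw w (q+2) (i+1) then 1 else 0)
          = if w i ≠ w (i+1) then 1 else 0 := by
      intro i hi
      rw [Finset.mem_Ico] at hi
      rw [hvlt i (by omega), hvlt (i+1) (by omega)]
    have e2 : ∑ i ∈ Finset.Ico q (q+3),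
        (if insw w (q+2) i ≠ insw w (q+2) (i+1) then 1 else 0)
          = (if w q then 1 else 0) + 1 + (if w (q+2) then 0 else 1) := by
      rw [sum_Ico_three]
      rw [hvlt q (by omega), hveq (q+1) (by omega), hvp, hvgt (q+3) (by omega)]
      have h4 : q + 3 - 1 = q + 2 := by omega
      rw [show q+1+1 = q+2 by omega, show q+2+1 = q+3 by omega, h4]
      cases h1 : w q <;> cases h2 : w (q+2) <;> simp
    have e3 : ∑ i ∈ Finset.Ico (q+3) (q+2+s+1),
        (if insw w (q+2) i ≠ insw w (q+2) (i+1) then 1 else 0)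
          = ∑ i ∈ Finset.Ico (q+2) (q+2+s), (if w i ≠ w (i+1) then 1 else 0) := by
      rw [show q+3 = (q+2)+1 from rfl, show q+2+s+1 = (q+2+s)+1 from rfl]
      rw [← sum_shift (fun i => if w i ≠ w (i+1) then 1 else 0) (q+2) (q+2+s)]
      refine Finset.sum_congr rfl fun i hi => ?_
      rw [Finset.mem_Ico] at hi
      rw [hvgt i (by omega), hvgt (i+1) (by omega)]
      have h4 : i + 1 - 1 = i := by omega
      rw [h4]
      have h5 : i - 1 + 1 = i := by omega
      rw [h5]
    rw [Finset.sum_congr rfl e1, e2, e3]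
    -- RHS
    rw [← Finset.sum_Ico_consecutive _ (by omega : 0 ≤ q) (by omega : q ≤ q+2+s)]
    rw [← Finset.sum_Ico_consecutive _ (by omega : q ≤ q+2) (by omega : q+2 ≤ q+2+s)]
    rw [sum_Ico_two]
    unfold dlt
    simp only [if_neg (by omega : q+2 ≠ 0), if_neg (by omega : q+2 ≠ q+2+s+2),
      if_neg (by omega : q+2 ≠ 1), if_neg (by omega : q+2 ≠ q+2+s+1)]
    have hq1 : q + 2 - 1 = q + 1 := by omega
    have hq2 : q + 2 - 2 = q := by omega
    rw [hq1, hq2]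
    cases h0 : w q <;> cases h1 : w (q+1) <;> cases h2 : w (q+2) <;> simp [h0, h1, h2] <;> omega
  · -- p = m + 1, with p ≥ 2 so m ≥ 1
    have hpm : p = m + 1 := by omega
    subst hpm
    obtain ⟨q, rfl⟩ : ∃ q, m = q + 1 := ⟨m - 1, by omega⟩
    unfold chgp
    rw [Finset.sum_range_succ, Finset.sum_range_succ]
    have e1 : ∀ i ∈ Finset.range q,
        (if insw w (q+2) i ≠ insw w (q+2) (i+1) then 1 else 0)
          = if w i ≠ w (i+1) then 1 else 0 := by
      intro i hi
      rw [Finset.mem_range] at hi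
      rw [hvlt i (by omega), hvlt (i+1) (by omega)]
    rw [Finset.sum_congr rfl e1, hvlt q (by omega), hveq (q+1) (by omega)]
    rw [show q+1+1 = q+2 by omega, hvp]
    conv_rhs => rw [Finset.sum_range_succ]
    unfold dlt
    simp only [if_neg (by omega : q+2 ≠ 0), if_neg (by omega : q+2 ≠ q+1+2),
      if_neg (by omega : q+2 ≠ 1), if_pos rfl]
    have hq1 : q + 1 - 1 = q := by omega
    rw [hq1]
    cases h0 : w q <;> cases h1 : w (q+1) <;> simp [h0, h1] <;> omega


lemma dlt_end (m : ℕ) (w : ℕ → Bool) : dlt m w (m+2) = if w m then 1 else 0 := by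
  unfold dlt; rw [if_neg (by omega : m+2 ≠ 0), if_pos rfl]

lemma dlt_top (m : ℕ) (w : ℕ → Bool) (hm : 1 ≤ m) :
    dlt m w (m+1) = if w m then (if w (m-1) then 2 else 0) else 1 := by
  unfold dlt
  rw [if_neg (by omega : m+1 ≠ 0), if_neg (by omega : m+1 ≠ m+2),
    if_neg (by omega : m+1 ≠ 1), if_pos rfl]

lemma dlt_top0 (w : ℕ → Bool) : dlt 0 w 1 = 1 := by
  unfold dlt
  rw [if_neg (by omega : (1:ℕ) ≠ 0), if_neg (by omega : (1:ℕ) ≠ 0+2), if_pos rfl, if_pos rfl]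

lemma dlt_one (m : ℕ) (w : ℕ → Bool) (hm : 1 ≤ m) :
    dlt m w 1 = if w 0 then 1 else if w 1 then 0 else 2 := by
  unfold dlt
  rw [if_neg (by omega : (1:ℕ) ≠ 0), if_neg (by omega : (1:ℕ) ≠ m+2), if_pos rfl,
    if_neg (by omega : m ≠ 0)]

lemma dlt_int (m : ℕ) (w : ℕ → Bool) (p : ℕ) (h2 : 2 ≤ p) (hm : p ≤ m) :
    dlt m w p = if w (p-1) then (if w (p-2) then 2 else 0)
      else (if w p then 0 else 2) := by
  unfold dlt
  rw [if_neg (by omega : p ≠ 0), if_neg (by omega : p ≠ m+2),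
    if_neg (by omega : p ≠ 1), if_neg (by omega : p ≠ m+1)]

lemma dlt_zero (m : ℕ) (w : ℕ → Bool) : dlt m w 0 = if w 0 then 0 else 1 := by
  unfold dlt; rw [if_pos rfl]

lemma dlt_le_two (m : ℕ) (w : ℕ → Bool) (p : ℕ) : dlt m w p ≤ 2 := by
  unfold dlt; split_ifs <;> omega

lemma dlt_stable (m : ℕ) (w : ℕ → Bool) (p : ℕ) (hp : p ≤ m) :
    dlt (m+1) w p = dlt m w p := by
  rcases Nat.eq_zero_or_pos p with rfl | h1
  · rw [dlt_zero, dlt_zero]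
  rcases Nat.lt_or_ge p 2 with h2 | h2
  · have : p = 1 := by omega
    subst this
    rw [dlt_one _ _ (by omega), dlt_one _ _ (by omega)]
  · rw [dlt_int _ _ _ h2 hp, dlt_int _ _ _ h2 (by omega)]


lemma peel3 (M : ℕ) (d : ℕ → ℕ) :
    ∑ p ∈ Finset.range (M+3), d p
      = (∑ p ∈ Finset.range M, d p) + d M + d (M+1) + d (M+2) := by
  rw [show M+3 = (M+2)+1 from rfl, Finset.sum_range_succ,
    show M+2 = (M+1)+1 from rfl, Finset.sum_range_succ, Finset.sum_range_succ]

lemma peel2 (M : ℕ) (d : ℕ → ℕ) :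
    ∑ p ∈ Finset.range (M+2), d p
      = (∑ p ∈ Finset.range M, d p) + d M + d (M+1) := by
  rw [show M+2 = (M+1)+1 from rfl, Finset.sum_range_succ, Finset.sum_range_succ]

lemma count_aux (m : ℕ) (w : ℕ → Bool) (t : ℕ) (ht : t = 0 ∨ t = 1) :
    (∑ p ∈ Finset.range (m+3), if dlt m w p = t then 1 else 0)
      = if t = 0 then 1 + chgp m w else 2 := by
  induction m with
  | zero =>
      rw [peel3 0]
      rw [show (0:ℕ)+1 = 1 from rfl, show (0:ℕ)+2 = 2 from rfl]
      rw [dlt_zero, dlt_top0, show (2:ℕ) = 0+2 from rfl, dlt_end]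
      have hc : chgp 0 w = 0 := by simp [chgp]
      rw [hc]
      simp only [Finset.range_zero, Finset.sum_empty]
      rcases ht with rfl | rfl <;> cases h0 : w 0 <;> simp [h0]
  | succ m ih =>
      have hs : chgp (m+1) w = chgp m w + (if w m ≠ w (m+1) then 1 else 0) :=
        Finset.sum_range_succ _ _
      rw [show m+1+3 = (m+1)+3 from rfl, peel3 (m+1)]
      rw [show m+3 = (m+1)+2 from rfl, peel2 (m+1)] at ih
      have e1 : ∀ p ∈ Finset.range (m+1),
          (if dlt (m+1) w p = t then (1:ℕ) else 0) = (if dlt m w p = t then 1 else 0) := by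
        intro p hp
        rw [Finset.mem_range] at hp
        rw [dlt_stable m w p (by omega)]
      rw [Finset.sum_congr rfl e1, hs]
      have hA : dlt (m+1) w ((m+1)+2) = if w (m+1) then 1 else 0 := dlt_end _ _
      have hB : dlt (m+1) w ((m+1)+1) = if w (m+1) then (if w m then 2 else 0) else 1 := by
        rw [dlt_top (m+1) w (by omega)]
        rfl
      have hD : dlt m w ((m+1)+1) = if w m then 1 else 0 := by
        rw [show (m+1)+1 = m+2 from rfl]
        exact dlt_end m w
      rw [hA, hB]
      rw [hD] at ih
      rcases Nat.eq_zero_or_pos m with rfl | hm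
      · have hC : dlt (0+1) w (0+1) = if w 0 then 1 else if w 1 then 0 else 2 :=
          dlt_one 1 w (by omega)
        have hE : dlt 0 w (0+1) = 1 := dlt_top0 w
        rw [hC]
        rw [hE] at ih
        have hc0 : chgp 0 w = 0 := by simp [chgp]
        rcases ht with rfl | rfl <;> cases h0 : w 0 <;> cases h1 : w 1 <;>
          simp only [hc0, h0, h1, show (0:ℕ)+1 = 1 from rfl, ne_eq, Finset.sum_range_one, dlt_zero] at ih ⊢ <;>
          simp at ih ⊢ <;> omega
      · have hC : dlt (m+1) w (m+1) = if w m then (if w (m-1) then 2 else 0)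
            else (if w (m+1) then 0 else 2) := by
          rw [dlt_int (m+1) w (m+1) (by omega) (by omega)]
          have r1 : m+1-1 = m := rfl
          have r2 : m+1-2 = m-1 := by omega
          rw [r1, r2]
        have hE : dlt m w (m+1) = if w m then (if w (m-1) then 2 else 0) else 1 :=
          dlt_top m w hm
        rw [hC]
        rw [hE] at ih
        rcases ht with rfl | rfl <;> cases h0 : w (m-1) <;> cases h1 : w m <;>
          cases h2 : w (m+1) <;> simp [h0, h1, h2] at ih ⊢ <;> omega

lemma count0 (m : ℕ) (w : ℕ → Bool) :
    (∑ p ∈ Finset.range (m+3), if dlt m w p = 0 then 1 else 0) = 1 + chgp m w := by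
  have := count_aux m w 0 (Or.inl rfl)
  simpa using this

lemma count1 (m : ℕ) (w : ℕ → Bool) :
    (∑ p ∈ Finset.range (m+3), if dlt m w p = 1 then 1 else 0) = 2 := by
  have := count_aux m w 1 (Or.inr rfl)
  simpa using this



lemma chgp_congr {M : ℕ} {w w' : ℕ → Bool} (h : ∀ i ≤ M, w i = w' i) :
    chgp M w = chgp M w' := by
  unfold chgp
  refine Finset.sum_congr rfl fun i hi => ?_
  rw [Finset.mem_range] at hi
  rw [h i (by omega), h (i+1) (by omega)]

lemma chgp_le (M : ℕ) (w : ℕ → Bool) : chgp M w ≤ M := by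
  calc chgp M w ≤ ∑ _i ∈ Finset.range M, 1 :=
        Finset.sum_le_sum (fun i _ => by split <;> omega)
    _ = M := by simp

lemma count2 (m : ℕ) (w : ℕ → Bool) :
    (∑ p ∈ Finset.range (m+3), if dlt m w p = 2 then 1 else 0) = m - chgp m w := by
  have h0 := count0 m w
  have h1 := count1 m w
  have hle := chgp_le m w
  have key : ∀ p ∈ Finset.range (m+3),
      (if dlt m w p = 0 then (1:ℕ) else 0) + (if dlt m w p = 1 then 1 else 0)
        + (if dlt m w p = 2 then 1 else 0) = 1 := by
    intro p _
    have := dlt_le_two m w p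
    interval_cases h : dlt m w p <;> simp
  have htot : (∑ p ∈ Finset.range (m+3), ((if dlt m w p = 0 then (1:ℕ) else 0)
      + (if dlt m w p = 1 then 1 else 0) + (if dlt m w p = 2 then 1 else 0))) = m + 3 := by
    rw [Finset.sum_congr rfl key]
    simp
  rw [Finset.sum_add_distrib, Finset.sum_add_distrib, h0, h1] at htot
  omega

lemma sum_pow (m : ℕ) (w : ℕ → Bool) :
    ∑ p ∈ Finset.range (m+3), (Polynomial.X : Polynomial ℝ) ^ (dlt m w p)
      = ((1 + chgp m w : ℕ) : Polynomial ℝ) + 2 * Polynomial.X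
        + ((m - chgp m w : ℕ) : Polynomial ℝ) * Polynomial.X ^ 2 := by
  have e : ∀ p ∈ Finset.range (m+3), (Polynomial.X : Polynomial ℝ) ^ (dlt m w p)
      = ((if dlt m w p = 0 then (1:ℕ) else 0 : ℕ) : Polynomial ℝ)
        + ((if dlt m w p = 1 then (1:ℕ) else 0 : ℕ) : Polynomial ℝ) * Polynomial.X
        + ((if dlt m w p = 2 then (1:ℕ) else 0 : ℕ) : Polynomial ℝ) * Polynomial.X ^ 2 := by
    intro p _
    have := dlt_le_two m w p
    interval_cases h : dlt m w p <;> simp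
  rw [Finset.sum_congr rfl e]
  rw [Finset.sum_add_distrib, Finset.sum_add_distrib, ← Finset.sum_mul, ← Finset.sum_mul]
  rw [← Nat.cast_sum, ← Nat.cast_sum, ← Nat.cast_sum]
  rw [count0, count1, count2]
  norm_num



-- ## Permutation side

def dw {n : ℕ} (τ : Equiv.Perm (Fin n)) : ℕ → Bool :=
  fun i => decide (permVal τ (i+1) < permVal τ i)

lemma permVal_lt {n : ℕ} (τ : Equiv.Perm (Fin n)) (hn : 0 < n) (i : ℕ) :
    permVal τ i < n := by
  unfold permVal
  split
  · exact (τ _).isLt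
  · exact hn

lemma permVal_inj {n : ℕ} (τ : Equiv.Perm (Fin n)) {a b : ℕ} (ha : a < n) (hb : b < n)
    (h : permVal τ a = permVal τ b) : a = b := by
  unfold permVal at h
  rw [dif_pos ha, dif_pos hb] at h
  have h2 := τ.injective (Fin.val_injective h)
  simpa using congrArg Fin.val h2

lemma runs_eq_chgp {n : ℕ} (hn : 2 ≤ n) (τ : Equiv.Perm (Fin n)) :
    runs n τ = 1 + chgp (n-2) (dw τ) := by
  unfold runs
  rw [if_neg (by omega)]
  congr 1
  rw [Finset.card_filter, Finset.sum_Ico_eq_sum_range]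
  unfold chgp
  have hcard : n - 1 - 1 = n - 2 := by omega
  rw [hcard]
  refine Finset.sum_congr rfl fun i hi => ?_
  rw [Finset.mem_range] at hi
  have h1 : 1 + i - 1 = i := by omega
  have h2 : 1 + i + 1 = i + 2 := by omega
  have h3 : 1 + i = i + 1 := by omega
  rw [h1, h2, h3]
  have hxy : permVal τ i ≠ permVal τ (i+1) := fun h => by
    have := permVal_inj τ (by omega) (by omega) h; omega
  have hyz : permVal τ (i+1) ≠ permVal τ (i+2) := fun h => by
    have := permVal_inj τ (by omega) (by omega) h; omega
  unfold dw
  by_cases hxy' : permVal τ (i+1) < permVal τ i <;>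
    by_cases hyz' : permVal τ (i+2) < permVal τ (i+1) <;>
      simp [hxy', hyz'] <;> omega

lemma runs_lt {n : ℕ} (hn : 2 ≤ n) (τ : Equiv.Perm (Fin n)) : runs n τ < n := by
  rw [runs_eq_chgp hn τ]
  have := chgp_le (n-2) (dw τ)
  omega

noncomputable def insp {n : ℕ} (τ : Equiv.Perm (Fin n)) (p : Fin (n+1)) :
    Equiv.Perm (Fin (n+1)) :=
  ((finSuccEquiv' p).trans τ.optionCongr).trans (finSuccEquiv' (Fin.last n)).symm

lemma insp_apply_self {n : ℕ} (τ : Equiv.Perm (Fin n)) (p : Fin (n+1)) :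
    insp τ p p = Fin.last n := by
  simp [insp, finSuccEquiv'_at, finSuccEquiv'_symm_none]

lemma insp_apply_succAbove {n : ℕ} (τ : Equiv.Perm (Fin n)) (p : Fin (n+1)) (i : Fin n) :
    insp τ p (p.succAbove i) = (τ i).castSucc := by
  simp [insp, finSuccEquiv'_succAbove, finSuccEquiv'_symm_some, Fin.succAbove_last]

lemma permVal_insp {n : ℕ} (τ : Equiv.Perm (Fin n)) (p : Fin (n+1)) (j : ℕ) :
    permVal (insp τ p) j
      = if j < (p:ℕ) then permVal τ j else if j = (p:ℕ) then n else permVal τ (j-1) := by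
  by_cases hj : j < n + 1
  · have hL : permVal (insp τ p) j = ((insp τ p) ⟨j, hj⟩ : ℕ) := by
      unfold permVal; rw [dif_pos hj]
    rcases lt_trichotomy j (p:ℕ) with hlt | heq | hgt
    · have hjn : j < n := by have := p.isLt; omega
      have hfin : (⟨j, hj⟩ : Fin (n+1)) = p.succAbove ⟨j, hjn⟩ := by
        rw [Fin.succAbove_of_castSucc_lt _ _ (by rw [Fin.lt_def]; exact hlt)]
        rfl
      rw [if_pos hlt, hL, hfin, insp_apply_succAbove]
      unfold permVal
      rw [dif_pos hjn]
      rfl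
    · rw [if_neg (by omega), if_pos heq, hL]
      have hfin : (⟨j, hj⟩ : Fin (n+1)) = p := by
        apply Fin.val_injective; exact heq
      rw [hfin, insp_apply_self]
      rfl
    · have hj1 : j - 1 < n := by omega
      have hfin : (⟨j, hj⟩ : Fin (n+1)) = p.succAbove ⟨j-1, hj1⟩ := by
        rw [Fin.succAbove_of_le_castSucc _ _ (by rw [Fin.le_def]; simp; omega)]
        apply Fin.val_injective
        simp [Fin.succ]
        omega
      rw [if_neg (by omega), if_neg (by omega), hL, hfin, insp_apply_succAbove]
      unfold permVal
      rw [dif_pos hj1]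
      rfl
  · have h0 : permVal (insp τ p) j = 0 := by unfold permVal; rw [dif_neg hj]
    have hp := p.isLt
    rw [h0, if_neg (by omega), if_neg (by omega)]
    unfold permVal
    rw [dif_neg (by omega)]

lemma dw_def {n : ℕ} (τ : Equiv.Perm (Fin n)) (a : ℕ) :
    dw τ a = decide (permVal τ (a+1) < permVal τ a) := rfl

lemma dw_insp {n : ℕ} (τ : Equiv.Perm (Fin n)) (p : Fin (n+1)) (i : ℕ) (hi : i < n) :
    dw (insp τ p) i = insw (dw τ) (p:ℕ) i := by
  have hn : 0 < n := by omega
  rcases Nat.lt_or_ge (i+1) (p:ℕ) with h1 | h1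
  · have e1 : permVal (insp τ p) i = permVal τ i := by
      rw [permVal_insp]
      simp only [if_pos (show i < (p:ℕ) by omega)]
    have e2 : permVal (insp τ p) (i+1) = permVal τ (i+1) := by
      rw [permVal_insp]
      simp only [if_pos h1]
    rw [dw_def (insp τ p) i, e1, e2]
    unfold insw
    rw [if_pos h1, dw_def]
  rcases Nat.eq_or_lt_of_le h1 with h2 | h2
  · -- p = i + 1
    have e1 : permVal (insp τ p) i = permVal τ i := by
      rw [permVal_insp]
      simp only [if_pos (show i < (p:ℕ) by omega)]
    have e2 : permVal (insp τ p) (i+1) = n := by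
      rw [permVal_insp]
      simp only [if_neg (show ¬ (i+1 < (p:ℕ)) by omega), if_pos (show i+1 = (p:ℕ) by omega)]
    have hB : ¬ (i + 1 < (p:ℕ)) := by omega
    have hC : i + 1 = (p:ℕ) := by omega
    rw [dw_def (insp τ p) i, e1, e2]
    unfold insw
    rw [if_neg hB, if_pos hC]
    simp only [decide_eq_false_iff_not]
    have := permVal_lt τ hn i
    omega
  rcases Nat.eq_or_lt_of_le (show (p:ℕ) ≤ i by omega) with h3 | h3
  · -- p = i
    have e1 : permVal (insp τ p) i = n := by
      rw [permVal_insp]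
      simp only [if_neg (show ¬ (i < (p:ℕ)) by omega), if_pos (show i = (p:ℕ) by omega)]
    have e2 : permVal (insp τ p) (i+1) = permVal τ i := by
      rw [permVal_insp]
      simp only [if_neg (show ¬ (i+1 < (p:ℕ)) by omega), if_neg (show ¬ (i+1 = (p:ℕ)) by omega)]
      rw [show i + 1 - 1 = i from rfl]
    have hB : ¬ (i + 1 < (p:ℕ)) := by omega
    have hC : ¬ (i + 1 = (p:ℕ)) := by omega
    have hD : i = (p:ℕ) := by omega
    rw [dw_def (insp τ p) i, e1, e2]
    unfold insw
    rw [if_neg hB, if_neg hC, if_pos hD]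
    simp only [decide_eq_true_eq]
    exact permVal_lt τ hn i
  · -- p < i
    have e1 : permVal (insp τ p) i = permVal τ (i-1) := by
      rw [permVal_insp]
      simp only [if_neg (show ¬ (i < (p:ℕ)) by omega), if_neg (show ¬ (i = (p:ℕ)) by omega)]
    have e2 : permVal (insp τ p) (i+1) = permVal τ i := by
      rw [permVal_insp]
      simp only [if_neg (show ¬ (i+1 < (p:ℕ)) by omega), if_neg (show ¬ (i+1 = (p:ℕ)) by omega)]
      rw [show i + 1 - 1 = i from rfl]
    have hB : ¬ (i + 1 < (p:ℕ)) := by omega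
    have hC : ¬ (i + 1 = (p:ℕ)) := by omega
    have hD : ¬ (i = (p:ℕ)) := by omega
    rw [dw_def (insp τ p) i, e1, e2]
    unfold insw
    rw [if_neg hB, if_neg hC, if_neg hD, dw_def τ (i-1)]
    rw [show i - 1 + 1 = i from by omega]

lemma insp_bijective {n : ℕ} :
    Function.Bijective (fun x : Equiv.Perm (Fin n) × Fin (n+1) => insp x.1 x.2) := by
  rw [Fintype.bijective_iff_injective_and_card]
  constructor
  · rintro ⟨τ, p⟩ ⟨τ', p'⟩ h
    simp only at h
    have hp : p = p' := by
      have h1 : insp τ' p' p' = Fin.last n := insp_apply_self τ' p'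
      have h2 : insp τ' p' p = Fin.last n := by
        rw [← h]; exact insp_apply_self τ p
      exact (insp τ' p').injective (h2.trans h1.symm)
    subst hp
    have hτ : τ = τ' := by
      apply Equiv.ext
      intro i
      have h3 := Equiv.ext_iff.mp h (p.succAbove i)
      rw [insp_apply_succAbove, insp_apply_succAbove] at h3
      exact Fin.castSucc_injective n h3
    rw [hτ]
  · rw [Fintype.card_prod, Fintype.card_perm, Fintype.card_perm, Fintype.card_fin,
      Fintype.card_fin, Nat.factorial_succ, Nat.mul_comm]

lemma Rpoly_eq_sum {n : ℕ} (hn : 2 ≤ n) :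
    Rpoly n = ∑ τ : Equiv.Perm (Fin n), (Polynomial.X : Polynomial ℝ) ^ (runs n τ) := by
  unfold Rpoly
  rw [← Finset.sum_fiberwise_of_maps_to
    (fun τ _ => Finset.mem_range.mpr (runs_lt hn τ))
    (fun τ => (Polynomial.X : Polynomial ℝ) ^ (runs n τ))]
  refine Finset.sum_congr rfl fun k _ => ?_
  have e : ∀ τ ∈ Finset.univ.filter (fun τ : Equiv.Perm (Fin n) => runs n τ = k),
      (Polynomial.X : Polynomial ℝ) ^ (runs n τ) = Polynomial.X ^ k := by
    intro τ hτ
    rw [Finset.mem_filter] at hτ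
    rw [hτ.2]
  rw [Finset.sum_congr rfl e, Finset.sum_const]
  show Polynomial.C ((R n k : ℕ) : ℝ) * Polynomial.X ^ k = _
  rw [Polynomial.C_eq_natCast, R, nsmul_eq_mul]

lemma runs_insp {n : ℕ} (hn : 2 ≤ n) (τ : Equiv.Perm (Fin n)) (p : Fin (n+1)) :
    runs (n+1) (insp τ p) = runs n τ + dlt (n-2) (dw τ) (p:ℕ) := by
  have h1 : runs (n+1) (insp τ p) = 1 + chgp (n+1-2) (dw (insp τ p)) :=
    runs_eq_chgp (by omega) _
  have h2 : chgp (n-1) (dw (insp τ p)) = chgp (n-1) (insw (dw τ) (p:ℕ)) :=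
    chgp_congr (fun i hi => dw_insp τ p i (by omega))
  have h3 : chgp ((n-2)+1) (insw (dw τ) (p:ℕ))
      = chgp (n-2) (dw τ) + dlt (n-2) (dw τ) (p:ℕ) :=
    insw_chg _ _ _ (by have := p.isLt; omega)
  rw [h1, show n+1-2 = n-1 by omega, h2, show n-1 = (n-2)+1 by omega, h3,
    runs_eq_chgp hn τ]
  omega

lemma recurrence (n : ℕ) (hn : 2 ≤ n) :
    Rpoly (n+1) = Polynomial.X * (1 - Polynomial.X^2) * (Rpoly n).derivative
      + Polynomial.X * (2 + (((n:ℕ) : Polynomial ℝ) - 1) * Polynomial.X) * Rpoly n := by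
  rw [Rpoly_eq_sum (show 2 ≤ n+1 by omega), Rpoly_eq_sum hn]
  rw [← Fintype.sum_bijective (fun x : Equiv.Perm (Fin n) × Fin (n+1) => insp x.1 x.2)
    insp_bijective
    (fun x => (Polynomial.X : Polynomial ℝ) ^ (runs (n+1) (insp x.1 x.2)))
    (fun σ => (Polynomial.X : Polynomial ℝ) ^ (runs (n+1) σ))
    (fun x => rfl)]
  rw [Fintype.sum_prod_type]
  have step1 : ∀ τ : Equiv.Perm (Fin n),
      (∑ p : Fin (n+1), (Polynomial.X : Polynomial ℝ) ^ (runs (n+1) (insp τ p)))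
        = (Polynomial.X : Polynomial ℝ) ^ (runs n τ) *
          (((1 + chgp (n-2) (dw τ) : ℕ) : Polynomial ℝ) + 2 * Polynomial.X
            + (((n-2) - chgp (n-2) (dw τ) : ℕ) : Polynomial ℝ) * Polynomial.X ^ 2) := by
    intro τ
    have e : ∀ p : Fin (n+1), (Polynomial.X : Polynomial ℝ) ^ (runs (n+1) (insp τ p))
        = Polynomial.X ^ (runs n τ) * Polynomial.X ^ (dlt (n-2) (dw τ) (p:ℕ)) := by
      intro p
      rw [runs_insp hn τ p, pow_add]
    rw [Finset.sum_congr rfl (fun p _ => e p), ← Finset.mul_sum]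
    congr 1
    rw [Fin.sum_univ_eq_sum_range
      (fun p => (Polynomial.X : Polynomial ℝ) ^ (dlt (n-2) (dw τ) p)) (n+1)]
    rw [show (n:ℕ)+1 = (n-2)+3 by omega]
    exact sum_pow (n-2) (dw τ)
  rw [Finset.sum_congr rfl (fun τ _ => step1 τ)]
  rw [Polynomial.derivative_sum]
  rw [Finset.mul_sum, Finset.mul_sum, ← Finset.sum_add_distrib]
  refine Finset.sum_congr rfl fun τ _ => ?_
  rw [Polynomial.derivative_X_pow, Polynomial.C_eq_natCast]
  have hk := runs_eq_chgp hn τ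
  set c := chgp (n-2) (dw τ) with hc
  have hcle : c ≤ n - 2 := chgp_le _ _
  rw [hk]
  have h1 : (1 + c) - 1 = c := by omega
  rw [h1]
  have hcast : (((n-2) - c : ℕ) : Polynomial ℝ)
      = ((n:ℕ) : Polynomial ℝ) - 2 - ((c : ℕ) : Polynomial ℝ) := by
    rw [Nat.cast_sub hcle, Nat.cast_sub (show 2 ≤ n from hn)]
    norm_num
  rw [hcast]
  push_cast
  ring

-- ## Divisibility induction

lemma deriv_aux (m : ℕ) (g : Polynomial ℝ) :
    (Polynomial.X + 1) * Polynomial.derivative ((Polynomial.X + 1)^m * g)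
      = (Polynomial.X + 1)^m * (Polynomial.C (m:ℝ) * g
          + (Polynomial.X + 1) * Polynomial.derivative g) := by
  rw [Polynomial.derivative_mul, Polynomial.derivative_pow]
  rw [show Polynomial.derivative (Polynomial.X + 1 : Polynomial ℝ) = 1 by simp]
  cases m with
  | zero => simp
  | succ k =>
      rw [show (k+1) - 1 = k from rfl]
      ring

lemma dvd_easy (m : ℕ) (f a b : Polynomial ℝ) (h : (Polynomial.X + 1)^m ∣ f) :
    (Polynomial.X + 1)^m ∣ Polynomial.X * (1 - Polynomial.X^2) * Polynomial.derivative f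
      + Polynomial.X * (a + b * Polynomial.X) * f := by
  obtain ⟨g, rfl⟩ := h
  apply dvd_add
  · have h2 : (Polynomial.X : Polynomial ℝ) * (1 - Polynomial.X^2)
        * Polynomial.derivative ((Polynomial.X + 1)^m * g)
        = Polynomial.X * (1 - Polynomial.X)
          * ((Polynomial.X + 1) * Polynomial.derivative ((Polynomial.X + 1)^m * g)) := by
      ring
    rw [h2, deriv_aux]
    exact ⟨Polynomial.X * (1 - Polynomial.X) * (Polynomial.C (m:ℝ) * g
      + (Polynomial.X + 1) * Polynomial.derivative g), by ring⟩
  · exact ⟨Polynomial.X * (a + b * Polynomial.X) * g, by ring⟩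

lemma dvd_jump (m : ℕ) (g : Polynomial ℝ)
    (hf : Rpoly (2*m+3) = (Polynomial.X + 1)^m * g) :
    (Polynomial.X + 1)^(m+1) ∣ Rpoly (2*m+3+1) := by
  have hrec := recurrence (2*m+3) (by omega)
  have key : (Polynomial.X + 1) * Rpoly (2*m+3+1)
      = (Polynomial.X + 1)^(m+1)
        * (Polynomial.X * (1 - Polynomial.X) * (Polynomial.C (m:ℝ) * g
            + (Polynomial.X + 1) * Polynomial.derivative g)
          + Polynomial.X * (2 + (((2*m+3 : ℕ) : Polynomial ℝ) - 1) * Polynomial.X) * g) := by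
    rw [hrec, hf, mul_add]
    have e1 : (Polynomial.X + 1) * (Polynomial.X * (1 - Polynomial.X^2)
        * Polynomial.derivative ((Polynomial.X + 1)^m * g))
        = (Polynomial.X * (1 - Polynomial.X)) * ((Polynomial.X + 1)
          * ((Polynomial.X + 1) * Polynomial.derivative ((Polynomial.X + 1)^m * g))) := by
      ring
    rw [e1, deriv_aux]
    ring
  have hroot : (Polynomial.X + 1 : Polynomial ℝ)
      ∣ (Polynomial.X * (1 - Polynomial.X) * (Polynomial.C (m:ℝ) * g
          + (Polynomial.X + 1) * Polynomial.derivative g)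
        + Polynomial.X * (2 + (((2*m+3 : ℕ) : Polynomial ℝ) - 1) * Polynomial.X) * g) := by
    have hC : Polynomial.C (-1 : ℝ) = -1 := by simp
    rw [show (Polynomial.X + 1 : Polynomial ℝ) = Polynomial.X - Polynomial.C (-1) by
      rw [hC, sub_neg_eq_add]]
    rw [Polynomial.dvd_iff_isRoot]
    simp only [Polynomial.IsRoot, Polynomial.eval_add, Polynomial.eval_mul,
      Polynomial.eval_sub, Polynomial.eval_pow, Polynomial.eval_X, Polynomial.eval_one,
      Polynomial.eval_C, Polynomial.eval_ofNat, Polynomial.eval_natCast]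
    push_cast
    ring
  obtain ⟨B', hB'⟩ := hroot
  have hX0 : (Polynomial.X + 1 : Polynomial ℝ) ≠ 0 := fun h => by
    have h2 := congrArg (Polynomial.eval 0) h
    simp at h2
  refine ⟨B', mul_left_cancel₀ hX0 ?_⟩
  rw [key, hB']
  ring

end RunsAux

/-- `R_n(x)` is divisible by `(x+1)^{⌊n/2⌋-1}`. -/
theorem Rpoly_divisible (n : ℕ) (hn : 2 ≤ n) :
    (Polynomial.X + 1) ^ (n / 2 - 1) ∣ Rpoly n := by
  induction n, hn using Nat.le_induction with
  | base => norm_num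
  | succ n hn ih =>
    rcases Nat.even_or_odd n with he | ho
    · have hexp : (n+1)/2 - 1 = n/2 - 1 := by
        obtain ⟨k, rfl⟩ := he; omega
      rw [hexp, RunsAux.recurrence n hn]
      exact RunsAux.dvd_easy _ _ _ _ ih
    · obtain ⟨k, hk0⟩ := ho
      subst hk0
      have hk : 1 ≤ k := by omega
      obtain ⟨m, rfl⟩ : ∃ m, k = m+1 := ⟨k-1, by omega⟩
      have hexp : (2*(m+1)+1)/2 - 1 = m := by omega
      rw [hexp] at ih
      obtain ⟨g, hg⟩ := ih
      have hj := RunsAux.dvd_jump m g (by rw [show 2*m+3 = 2*(m+1)+1 by omega]; exact hg)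
      rw [show (2*(m+1)+1+1)/2 - 1 = m+1 by omega, show 2*(m+1)+1+1 = 2*m+3+1 by omega]
      exact hj
end
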